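/- arXiv:1710.09704 — 5 statements merged into one kernel-verified Lean document; each statement's English description precedes it below -/
import Mathlib

section
/- Let 0<q<1, let z∈ℂ satisfy (1-q)|z|² < 1, and let ξ ∈ I_q := (-√2/√(1-q), √2/√(1-q)). Then ∑_{j=0}^∞ conj(z)^j (1-q)^{j/2}/√((q;q)_j) · φ_j^q(ξ) = ( √2·ω_q(√2 ξ) )^{1/2} · ∏_{k=0}^∞ ( 1 - √2·conj(z)·ξ·q^k(1-q) + conj(z)²·q^{2k}(1-q) )^{-1}. (Corollary 1.1: wave function of the coherent state for m=0, before normalization by e_q(|z|²)^{-1/2}.) -/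
open Filter Finset MeasureTheory Topology

set_option maxHeartbeats 1000000

noncomputable section

/-- Finite q-Pochhammer symbol `(a;q)_n` in `ℂ`. -/
def qPochC (a q : ℂ) (n : ℕ) : ℂ := ∏ k ∈ Finset.range n, (1 - a * q ^ k)

/-- Infinite q-Pochhammer symbol `(a;q)_∞` in `ℂ`. -/
def qPochCInf (a q : ℂ) : ℂ := ∏' k : ℕ, (1 - a * q ^ k)

/-- Finite q-Pochhammer symbol `(a;q)_n` in `ℝ`. -/
def qPochR (a q : ℝ) (n : ℕ) : ℝ := ∏ k ∈ Finset.range n, (1 - a * q ^ k)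

/-- Infinite q-Pochhammer symbol `(a;q)_∞` in `ℝ`. -/
def qPochRInf (a q : ℝ) : ℝ := ∏' k : ℕ, (1 - a * q ^ k)

/-- Wall polynomial `P_n(x;a|q)`. -/
def wallP (n : ℕ) (x a q : ℂ) : ℂ :=
  ∑ k ∈ Finset.range (n + 1),
    qPochC (q ^ (-(n : ℤ))) q k / (qPochC (a * q) q k * qPochC q q k) * (q * x) ^ k

/-- The coefficients `h_j^{m,q}(z)`. -/
def hcoef (q : ℝ) (m j : ℕ) (z : ℂ) : ℂ :=
  (-1 : ℂ) ^ (min m j) * (q : ℂ) ^ ((min m j).choose 2) * qPochC (q : ℂ) (q : ℂ) (max m j)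
    * (Real.sqrt (1 - q) : ℂ) ^ (Nat.dist m j)
    / (qPochC (q : ℂ) (q : ℂ) (Nat.dist m j)
        * (Real.sqrt (q ^ (m * j) * qPochR q q m * qPochR q q j) : ℂ))
    * (if j ≤ m then (starRingEnd ℂ) z ^ (m - j) else z ^ (j - m))
    * wallP (min m j) (((1 - q) * ‖z‖ ^ 2 : ℝ) : ℂ) ((q : ℂ) ^ (Nat.dist m j)) (q : ℂ)

/-- The weight `ω_q(u)`. -/
def omegaq (q u : ℝ) : ℝ :=
  qPochRInf q q * Real.sqrt (1 - q) / (4 * Real.pi * Real.sqrt (1 - (1 - q) * u ^ 2 / 4))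
    * ∏' k : ℕ, (1 + (2 - u ^ 2 * (1 - q)) * q ^ k + q ^ (2 * k))

/-- Continuous q-Hermite polynomial `H_n(x|q)` for `x ∈ [-1,1]`, via `x = cos θ`. -/
def qHermite (n : ℕ) (x q : ℝ) : ℝ :=
  ∑ k ∈ Finset.range (n + 1),
    qPochR q q n / (qPochR q q k * qPochR q q (n - k))
      * Real.cos (((n : ℝ) - 2 * k) * Real.arccos x)

/-- The q-deformed Hermite functions `φ_j^q(ξ)`. -/
def phiq (q : ℝ) (j : ℕ) (ξ : ℝ) : ℝ :=
  Real.sqrt (Real.sqrt 2 * omegaq q (Real.sqrt 2 * ξ) / qPochR q q j)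
    * qHermite j (Real.sqrt ((1 - q) / 2) * ξ) q

/-- Al-Salam–Chihara polynomial `Q_m(x;a,b|q)` for `x ∈ [-1,1]`, via `x = cos θ`. -/
def alSalamChihara (m : ℕ) (x : ℝ) (a b q : ℂ) : ℂ :=
  qPochC (a * b) q m / a ^ m *
    ∑ k ∈ Finset.range (m + 1),
      qPochC (q ^ (-(m : ℤ))) q k
        * qPochC (a * Complex.exp ((Real.arccos x : ℂ) * Complex.I)) q k
        * qPochC (a * Complex.exp (-((Real.arccos x : ℂ) * Complex.I))) q k
        / (qPochC (a * b) q k * qPochC q q k) * (q : ℂ) ^ k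

/-- The interval `I_q = (-√2/√(1-q), √2/√(1-q))`. -/
def Iq (q : ℝ) : Set ℝ :=
  Set.Ioo (-(Real.sqrt 2 / Real.sqrt (1 - q))) (Real.sqrt 2 / Real.sqrt (1 - q))

/-! ### Auxiliary lemmas -/

section Aux

variable {q : ℝ}

lemma qPochR_pos (hq0 : 0 ≤ q) (hq1 : q < 1) (n : ℕ) : 0 < qPochR q q n := by
  refine Finset.prod_pos fun k _ => ?_
  have h : q * q ^ k = q ^ (k + 1) := (pow_succ' q k).symm
  have : q ^ (k + 1) < 1 := pow_lt_one₀ hq0 hq1 (Nat.succ_ne_zero k)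
  rw [h]; linarith

lemma qPochR_succ (a : ℝ) (n : ℕ) :
    qPochR a q (n + 1) = qPochR a q n * (1 - a * q ^ n) :=
  Finset.prod_range_succ _ n

/-- `1 - q * q ^ n > 0`. Helper for positivity of factors. -/
lemma one_sub_q_pow_pos (hq0 : 0 ≤ q) (hq1 : q < 1) (n : ℕ) : (0:ℝ) < 1 - q * q ^ n := by
  have h : q * q ^ n = q ^ (n + 1) := (pow_succ' q n).symm
  have : q ^ (n + 1) < 1 := pow_lt_one₀ hq0 hq1 (Nat.succ_ne_zero n)
  rw [h]; linarith

lemma summable_norm_aux (hq0 : 0 ≤ q) (hq1 : q < 1) {t : ℂ} (ht : ‖t‖ < 1) :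
    Summable (fun n : ℕ => ‖t ^ n / ((qPochR q q n : ℝ) : ℂ)‖) := by
  have hP := qPochR_pos hq0 hq1
  have hfe : (fun n : ℕ => ‖t ^ n / ((qPochR q q n : ℝ) : ℂ)‖)
      = fun n => ‖t‖ ^ n / qPochR q q n := by
    funext n
    rw [norm_div, norm_pow, Complex.norm_real, Real.norm_of_nonneg (hP n).le]
  rw [hfe]
  rcases eq_or_ne t 0 with rfl | ht0
  · apply summable_of_ne_finset_zero (s := {0})
    intro n hn
    simp only [Finset.mem_singleton] at hn
    simp [zero_pow hn]
  · have htpos : 0 < ‖t‖ := norm_pos_iff.mpr ht0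
    apply summable_of_ratio_test_tendsto_lt_one ht
    · filter_upwards with n
      exact (div_pos (pow_pos htpos n) (hP n)).ne'
    · have hrat : (fun n : ℕ => ‖‖t‖ ^ (n + 1) / qPochR q q (n + 1)‖ / ‖‖t‖ ^ n / qPochR q q n‖)
          = fun n => ‖t‖ / (1 - q * q ^ n) := by
        funext n
        have h1 : (0:ℝ) < 1 - q * q ^ n := one_sub_q_pow_pos hq0 hq1 n
        have e1 : (0:ℝ) < ‖t‖ ^ n / qPochR q q n := div_pos (pow_pos htpos n) (hP n)
        have e2 : (0:ℝ) < ‖t‖ ^ (n+1) / qPochR q q (n+1) := div_pos (pow_pos htpos _) (hP _)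
        rw [Real.norm_of_nonneg e2.le, Real.norm_of_nonneg e1.le, qPochR_succ]
        rw [pow_succ, div_eq_div_iff e1.ne' h1.ne']
        field_simp [(hP n).ne', h1.ne']
      rw [hrat]
      have h0 : Tendsto (fun n : ℕ => q * q ^ n) atTop (𝓝 0) := by
        simpa using (tendsto_pow_atTop_nhds_zero_of_lt_one hq0 hq1).const_mul q
      have h1 : Tendsto (fun n : ℕ => 1 - q * q ^ n) atTop (𝓝 1) := by
        simpa using tendsto_const_nhds.sub h0
      have h2 := (tendsto_const_nhds (x := ‖t‖)).div h1 one_ne_zero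
      rw [div_one] at h2
      exact h2

lemma multipliable_aux (c : ℕ → ℂ) (hc : Summable c) (h0 : ∀ k, 1 + c k ≠ 0) :
    Multipliable (fun k => 1 + c k) := by
  exact Complex.multipliable_one_add_of_summable hc

lemma factor_ne (hq0 : 0 ≤ q) (hq1 : q < 1) {t : ℂ} (ht : ‖t‖ < 1) (k : ℕ) :
    1 - t * (q : ℂ) ^ k ≠ 0 := by
  intro h
  have h1 : ‖t * (q : ℂ) ^ k‖ < 1 := by
    rw [norm_mul, norm_pow, Complex.norm_real, Real.norm_of_nonneg hq0]
    calc ‖t‖ * q ^ k ≤ ‖t‖ * 1 := by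
          have := pow_le_one₀ hq0 hq1.le (n := k)
          nlinarith [norm_nonneg t]
      _ < 1 := by simpa using ht
  have h2 : t * (q : ℂ) ^ k = 1 := by
    have := sub_eq_zero.mp h
    exact this.symm
  rw [h2] at h1
  simp at h1

lemma multipliable_one_sub (hq0 : 0 ≤ q) (hq1 : q < 1) {t : ℂ} (ht : ‖t‖ < 1) :
    Multipliable (fun k : ℕ => 1 - t * (q : ℂ) ^ k) := by
  have hq : ‖(q : ℂ)‖ < 1 := by
    rw [Complex.norm_real, Real.norm_of_nonneg hq0]; exact hq1
  have hs : Summable (fun k : ℕ => -(t * (q : ℂ) ^ k)) :=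
    (((summable_geometric_of_norm_lt_one hq).mul_left t).neg)
  have := multipliable_aux _ hs (fun k => by
    have := factor_ne hq0 hq1 ht k
    simpa [sub_eq_add_neg] using this)
  refine this.congr fun k => ?_
  simp [sub_eq_add_neg]

lemma euler_aux (hq0 : 0 ≤ q) (hq1 : q < 1) {t : ℂ} (ht : ‖t‖ < 1) :
    HasSum (fun n : ℕ => t ^ n / ((qPochR q q n : ℝ) : ℂ))
      (∏' k : ℕ, (1 - t * (q : ℂ) ^ k))⁻¹ := by
  have hP := qPochR_pos hq0 hq1
  have hPne : ∀ n, ((qPochR q q n : ℝ) : ℂ) ≠ 0 := fun n => by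
    exact_mod_cast Complex.ofReal_ne_zero.mpr (hP n).ne'
  set F : ℂ → ℂ := fun s => ∑' n : ℕ, s ^ n / ((qPochR q q n : ℝ) : ℂ) with hF
  have hsummable : ∀ s : ℂ, ‖s‖ < 1 → Summable (fun n : ℕ => s ^ n / ((qPochR q q n : ℝ) : ℂ)) :=
    fun s hs => (summable_norm_aux hq0 hq1 hs).of_norm
  -- functional equation
  have hfun : ∀ s : ℂ, ‖s‖ < 1 → (1 - s) * F s = F ((q : ℂ) * s) := by
    intro s hs
    have h0 : HasSum (fun n : ℕ => s ^ n / ((qPochR q q n : ℝ) : ℂ)) (F s) :=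
      (hsummable s hs).hasSum
    have h1 : HasSum (fun n : ℕ => s ^ (n + 1) / ((qPochR q q n : ℝ) : ℂ)) (s * F s) := by
      have := h0.mul_left s
      refine this.congr_fun fun n => ?_
      rw [pow_succ]; ring
    set g : ℕ → ℂ := fun n => if n = 0 then 0 else s ^ n / ((qPochR q q (n - 1) : ℝ) : ℂ)
      with hg
    have h2 : HasSum g (s * F s) := by
      have h1' : HasSum (fun n : ℕ => g (n + 1)) (s * F s) := by
        refine h1.congr_fun fun n => ?_
        simp [hg]
      have h2' := (hasSum_nat_add_iff (f := g) 1).mp h1'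
      have hg0 : ∑ i ∈ Finset.range 1, g i = 0 := by simp [hg]
      rw [hg0, add_zero] at h2'
      exact h2'
    have h3 := h0.sub h2
    have h4 : (fun n : ℕ => s ^ n / ((qPochR q q n : ℝ) : ℂ) - g n)
        = fun n => ((q : ℂ) * s) ^ n / ((qPochR q q n : ℝ) : ℂ) := by
      funext n
      cases n with
      | zero => simp [hg, qPochR]
      | succ m =>
        have hPm : qPochR q q (m + 1) = qPochR q q m * (1 - q * q ^ m) := qPochR_succ q m
        have h1q : (0:ℝ) < 1 - q * q ^ m := one_sub_q_pow_pos hq0 hq1 m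
        simp only [hg, if_neg (Nat.succ_ne_zero m), Nat.add_sub_cancel]
        rw [hPm]
        have e1 : ((qPochR q q m : ℝ) : ℂ) ≠ 0 := hPne m
        have e2 : ((1 - q * q ^ m : ℝ) : ℂ) ≠ 0 := by
          exact_mod_cast Complex.ofReal_ne_zero.mpr h1q.ne'
        have e2' : (1 : ℂ) - (q : ℂ) * (q : ℂ) ^ m ≠ 0 := by
          intro h
          apply h1q.ne'
          have : ((1 - q * q ^ m : ℝ) : ℂ) = 0 := by push_cast; rw [← h]
          exact_mod_cast this
        push_cast
        field_simp
        ring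
    rw [h4] at h3
    have hqs : ‖(q : ℂ) * s‖ < 1 := by
      rw [norm_mul, Complex.norm_real, Real.norm_of_nonneg hq0]
      nlinarith [norm_nonneg s]
    have := h3.tsum_eq
    have hFqs : F ((q : ℂ) * s) = F s - s * F s := by rw [hF]; exact this
    rw [hFqs]; ring
  -- iteration
  have hiter : ∀ N : ℕ, (∏ k ∈ Finset.range N, (1 - t * (q : ℂ) ^ k)) * F t
      = F ((q : ℂ) ^ N * t) := by
    intro N
    induction N with
    | zero => simp
    | succ n ih =>
      rw [Finset.prod_range_succ]
      have hqnt : ‖(q : ℂ) ^ n * t‖ < 1 := by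
        rw [norm_mul, norm_pow, Complex.norm_real, Real.norm_of_nonneg hq0]
        have : q ^ n ≤ 1 := pow_le_one₀ hq0 hq1.le
        nlinarith [norm_nonneg t, pow_nonneg hq0 n]
      have h := hfun ((q : ℂ) ^ n * t) hqnt
      calc (∏ k ∈ Finset.range n, (1 - t * (q : ℂ) ^ k)) * (1 - t * (q : ℂ) ^ n) * F t
          = (1 - (q : ℂ) ^ n * t) * ((∏ k ∈ Finset.range n, (1 - t * (q : ℂ) ^ k)) * F t) := by
            ring
        _ = (1 - (q : ℂ) ^ n * t) * F ((q : ℂ) ^ n * t) := by rw [ih]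
        _ = F ((q : ℂ) * ((q : ℂ) ^ n * t)) := h
        _ = F ((q : ℂ) ^ (n + 1) * t) := by rw [pow_succ]; ring_nf
  -- limit of F (q^N t)
  have hCsum : Summable (fun n : ℕ => ‖t ^ (n + 1) / ((qPochR q q (n + 1) : ℝ) : ℂ)‖) :=
    (summable_nat_add_iff 1).mpr (summable_norm_aux hq0 hq1 ht)
  set C : ℝ := ∑' n : ℕ, ‖t ^ (n + 1) / ((qPochR q q (n + 1) : ℝ) : ℂ)‖ with hC
  have hFb : ∀ N : ℕ, ‖F ((q : ℂ) ^ N * t) - 1‖ ≤ q ^ N * C := by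
    intro N
    have hqNt : ‖(q : ℂ) ^ N * t‖ < 1 := by
      rw [norm_mul, norm_pow, Complex.norm_real, Real.norm_of_nonneg hq0]
      have : q ^ N ≤ 1 := pow_le_one₀ hq0 hq1.le
      nlinarith [norm_nonneg t, pow_nonneg hq0 N]
    have h0 : HasSum (fun n : ℕ => ((q : ℂ) ^ N * t) ^ n / ((qPochR q q n : ℝ) : ℂ))
        (F ((q : ℂ) ^ N * t)) := (hsummable _ hqNt).hasSum
    have h1 : HasSum (fun n : ℕ => ((q : ℂ) ^ N * t) ^ (n + 1) / ((qPochR q q (n + 1) : ℝ) : ℂ))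
        (F ((q : ℂ) ^ N * t) - 1) := by
      refine (hasSum_nat_add_iff (f := fun n : ℕ =>
        ((q : ℂ) ^ N * t) ^ n / ((qPochR q q n : ℝ) : ℂ)) 1).mpr ?_
      have : F ((q : ℂ) ^ N * t) - 1 + ∑ i ∈ Finset.range 1,
          ((q : ℂ) ^ N * t) ^ i / ((qPochR q q i : ℝ) : ℂ) = F ((q : ℂ) ^ N * t) := by
        simp [qPochR]
      rw [this]
      exact h0
    have hbnd : ∀ n : ℕ, ‖((q : ℂ) ^ N * t) ^ (n + 1) / ((qPochR q q (n + 1) : ℝ) : ℂ)‖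
        ≤ q ^ N * ‖t ^ (n + 1) / ((qPochR q q (n + 1) : ℝ) : ℂ)‖ := by
      intro n
      rw [norm_div, norm_div, norm_pow, norm_pow, norm_mul, norm_pow, Complex.norm_real,
        Real.norm_of_nonneg hq0]
      have hqN1 : (q ^ N) ^ (n + 1) ≤ q ^ N := by
        have h1 : q ^ N ≤ 1 := pow_le_one₀ hq0 hq1.le
        have h2 : (0:ℝ) ≤ q ^ N := pow_nonneg hq0 N
        calc (q ^ N) ^ (n + 1) ≤ (q ^ N) ^ 1 :=
              pow_le_pow_of_le_one h2 h1 (by omega)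
          _ = q ^ N := pow_one _
      have hden : (0:ℝ) < ‖((qPochR q q (n + 1) : ℝ) : ℂ)‖ := by
        rw [Complex.norm_real, Real.norm_of_nonneg (hP (n + 1)).le]
        exact hP (n + 1)
      rw [mul_pow, ← mul_div_assoc]
      gcongr
    have hsn : Summable (fun n : ℕ =>
        ‖((q : ℂ) ^ N * t) ^ (n + 1) / ((qPochR q q (n + 1) : ℝ) : ℂ)‖) :=
      (summable_nat_add_iff 1).mpr (summable_norm_aux hq0 hq1 hqNt)
    calc ‖F ((q : ℂ) ^ N * t) - 1‖
        = ‖∑' n : ℕ, ((q : ℂ) ^ N * t) ^ (n + 1) / ((qPochR q q (n + 1) : ℝ) : ℂ)‖ := by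
          rw [h1.tsum_eq]
      _ ≤ ∑' n : ℕ, ‖((q : ℂ) ^ N * t) ^ (n + 1) / ((qPochR q q (n + 1) : ℝ) : ℂ)‖ :=
          norm_tsum_le_tsum_norm hsn
      _ ≤ ∑' n : ℕ, q ^ N * ‖t ^ (n + 1) / ((qPochR q q (n + 1) : ℝ) : ℂ)‖ :=
          Summable.tsum_le_tsum hbnd hsn (hCsum.mul_left _)
      _ = q ^ N * C := by rw [tsum_mul_left]
  have hlim1 : Tendsto (fun N : ℕ => F ((q : ℂ) ^ N * t)) atTop (𝓝 1) := by
    have h0 : Tendsto (fun N : ℕ => q ^ N * C) atTop (𝓝 0) := by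
      simpa using (tendsto_pow_atTop_nhds_zero_of_lt_one hq0 hq1).mul_const C
    have h1 : Tendsto (fun N : ℕ => F ((q : ℂ) ^ N * t) - 1) atTop (𝓝 0) :=
      squeeze_zero_norm hFb h0
    have := h1.add_const 1
    simpa using this
  have hm := multipliable_one_sub hq0 hq1 ht
  have hprodlim : Tendsto (fun N : ℕ => ∏ k ∈ Finset.range N, (1 - t * (q : ℂ) ^ k)) atTop
      (𝓝 (∏' k : ℕ, (1 - t * (q : ℂ) ^ k))) := hm.hasProd.tendsto_prod_nat
  have hmul : Tendsto (fun N : ℕ => (∏ k ∈ Finset.range N, (1 - t * (q : ℂ) ^ k)) * F t) atTop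
      (𝓝 ((∏' k : ℕ, (1 - t * (q : ℂ) ^ k)) * F t)) := hprodlim.mul_const _
  have heq : (fun N : ℕ => (∏ k ∈ Finset.range N, (1 - t * (q : ℂ) ^ k)) * F t)
      = fun N => F ((q : ℂ) ^ N * t) := funext hiter
  rw [heq] at hmul
  have hone : (∏' k : ℕ, (1 - t * (q : ℂ) ^ k)) * F t = 1 := tendsto_nhds_unique hmul hlim1
  have : (∏' k : ℕ, (1 - t * (q : ℂ) ^ k))⁻¹ = F t := inv_eq_of_mul_eq_one_right hone
  rw [this]
  exact (hsummable t ht).hasSum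

lemma sin_sum_zero (θ : ℝ) (n : ℕ) :
    ∑ k ∈ Finset.range (n + 1),
      Real.sin ((2 * (k : ℝ) - n) * θ) / (qPochR q q k * qPochR q q (n - k)) = 0 := by
  set f : ℕ → ℝ := fun k => Real.sin ((2 * (k : ℝ) - n) * θ) / (qPochR q q k * qPochR q q (n - k))
    with hf
  have h := Finset.sum_range_reflect f (n + 1)
  have h2 : ∀ j ∈ Finset.range (n + 1), f (n + 1 - 1 - j) = -f j := by
    intro j hj
    have hjn : j ≤ n := Nat.lt_succ_iff.mp (Finset.mem_range.mp hj)
    have e0 : n + 1 - 1 - j = n - j := by omega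
    have e1 : ((n - j : ℕ) : ℝ) = (n : ℝ) - j := by
      rw [Nat.cast_sub hjn]
    have e2 : n - (n - j) = j := Nat.sub_sub_self hjn
    rw [e0]
    simp only [hf, e1, e2]
    have e3 : (2 * ((n : ℝ) - j) - n) * θ = -((2 * (j : ℝ) - n) * θ) := by ring
    rw [e3, Real.sin_neg, mul_comm (qPochR q q (n - j))]
    ring
  rw [Finset.sum_congr rfl h2, Finset.sum_neg_distrib] at h
  linarith [h]

lemma term_identity (hq0 : 0 ≤ q) (hq1 : q < 1) (t : ℂ) (θ : ℝ) (n : ℕ) :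
    ∑ k ∈ Finset.range (n + 1),
        (t * Complex.exp (θ * Complex.I)) ^ k / ((qPochR q q k : ℝ) : ℂ) *
          ((t * Complex.exp (-(θ * Complex.I))) ^ (n - k) / ((qPochR q q (n - k) : ℝ) : ℂ))
      = t ^ n / ((qPochR q q n : ℝ) : ℂ) *
        ((∑ k ∈ Finset.range (n + 1),
          qPochR q q n / (qPochR q q k * qPochR q q (n - k))
            * Real.cos (((n : ℝ) - 2 * k) * θ) : ℝ) : ℂ) := by
  have hP := qPochR_pos hq0 hq1
  have hPne : ∀ m : ℕ, ((qPochR q q m : ℝ) : ℂ) ≠ 0 := fun m =>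
    Complex.ofReal_ne_zero.mpr (hP m).ne'
  have hterm : ∀ k ∈ Finset.range (n + 1),
      (t * Complex.exp (θ * Complex.I)) ^ k / ((qPochR q q k : ℝ) : ℂ) *
        ((t * Complex.exp (-(θ * Complex.I))) ^ (n - k) / ((qPochR q q (n - k) : ℝ) : ℂ))
      = t ^ n * (((Real.cos (((n : ℝ) - 2 * k) * θ) : ℝ) : ℂ)
          + ((Real.sin ((2 * (k : ℝ) - n) * θ) : ℝ) : ℂ) * Complex.I)
        / (((qPochR q q k : ℝ) : ℂ) * ((qPochR q q (n - k) : ℝ) : ℂ)) := by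
    intro k hk
    have hkn : k ≤ n := Nat.lt_succ_iff.mp (Finset.mem_range.mp hk)
    have htk : t ^ k * t ^ (n - k) = t ^ n := by
      rw [← pow_add]
      congr 1
      omega
    have hek : Complex.exp (θ * Complex.I) ^ k = Complex.exp ((k : ℂ) * (θ * Complex.I)) :=
      (Complex.exp_nat_mul _ k).symm
    have hek2 : Complex.exp (-(θ * Complex.I)) ^ (n - k)
        = Complex.exp (((n - k : ℕ) : ℂ) * (-(θ * Complex.I))) :=
      (Complex.exp_nat_mul _ (n - k)).symm
    have hcast : ((n - k : ℕ) : ℂ) = (n : ℂ) - k := Nat.cast_sub hkn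
    have hexp : Complex.exp ((k : ℂ) * (θ * Complex.I))
        * Complex.exp (((n - k : ℕ) : ℂ) * (-(θ * Complex.I)))
        = Complex.exp ((((2 * (k : ℝ) - n) * θ : ℝ) : ℂ) * Complex.I) := by
      rw [← Complex.exp_add, hcast]
      congr 1
      push_cast
      ring
    have hcossin : Complex.exp ((((2 * (k : ℝ) - n) * θ : ℝ) : ℂ) * Complex.I)
        = ((Real.cos (((n : ℝ) - 2 * k) * θ) : ℝ) : ℂ)
          + ((Real.sin ((2 * (k : ℝ) - n) * θ) : ℝ) : ℂ) * Complex.I := by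
      rw [Complex.exp_mul_I, ← Complex.ofReal_cos, ← Complex.ofReal_sin]
      have : Real.cos ((2 * (k : ℝ) - n) * θ) = Real.cos (((n : ℝ) - 2 * k) * θ) := by
        rw [show ((2 * (k : ℝ) - n) * θ) = -(((n : ℝ) - 2 * k) * θ) by ring, Real.cos_neg]
      rw [this]
    calc (t * Complex.exp (θ * Complex.I)) ^ k / ((qPochR q q k : ℝ) : ℂ) *
          ((t * Complex.exp (-(θ * Complex.I))) ^ (n - k) / ((qPochR q q (n - k) : ℝ) : ℂ))
        = (t ^ k * t ^ (n - k)) * (Complex.exp (θ * Complex.I) ^ k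
            * Complex.exp (-(θ * Complex.I)) ^ (n - k))
          / (((qPochR q q k : ℝ) : ℂ) * ((qPochR q q (n - k) : ℝ) : ℂ)) := by
          rw [mul_pow, mul_pow]; ring
      _ = t ^ n * (((Real.cos (((n : ℝ) - 2 * k) * θ) : ℝ) : ℂ)
            + ((Real.sin ((2 * (k : ℝ) - n) * θ) : ℝ) : ℂ) * Complex.I)
          / (((qPochR q q k : ℝ) : ℂ) * ((qPochR q q (n - k) : ℝ) : ℂ)) := by
          rw [htk, hek, hek2, hexp, hcossin]
  rw [Finset.sum_congr rfl hterm]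
  have hsplit : ∑ k ∈ Finset.range (n + 1),
      t ^ n * (((Real.cos (((n : ℝ) - 2 * k) * θ) : ℝ) : ℂ)
        + ((Real.sin ((2 * (k : ℝ) - n) * θ) : ℝ) : ℂ) * Complex.I)
      / (((qPochR q q k : ℝ) : ℂ) * ((qPochR q q (n - k) : ℝ) : ℂ))
      = (∑ k ∈ Finset.range (n + 1), t ^ n * ((Real.cos (((n : ℝ) - 2 * k) * θ) : ℝ) : ℂ)
          / (((qPochR q q k : ℝ) : ℂ) * ((qPochR q q (n - k) : ℝ) : ℂ)))
        + (t ^ n * Complex.I) * ∑ k ∈ Finset.range (n + 1),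
            ((Real.sin ((2 * (k : ℝ) - n) * θ) / (qPochR q q k * qPochR q q (n - k)) : ℝ) : ℂ) := by
    rw [Finset.mul_sum, ← Finset.sum_add_distrib]
    refine Finset.sum_congr rfl fun k _ => ?_
    push_cast
    have h1 := hPne k
    have h2 := hPne (n - k)
    field_simp
  rw [hsplit]
  have hzero : ∑ k ∈ Finset.range (n + 1),
      ((Real.sin ((2 * (k : ℝ) - n) * θ) / (qPochR q q k * qPochR q q (n - k)) : ℝ) : ℂ) = 0 := by
    rw [← Complex.ofReal_sum]
    rw [sin_sum_zero θ n]
    simp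
  rw [hzero, mul_zero, add_zero]
  rw [Complex.ofReal_sum, Finset.mul_sum]
  refine Finset.sum_congr rfl fun k _ => ?_
  push_cast
  have h1 := hPne k
  have h2 := hPne (n - k)
  have h3 := hPne n
  field_simp

lemma genfun (hq0 : 0 ≤ q) (hq1 : q < 1) {t : ℂ} (ht : ‖t‖ < 1) {x : ℝ}
    (hx1 : -1 ≤ x) (hx2 : x ≤ 1) :
    HasSum (fun n : ℕ => t ^ n / ((qPochR q q n : ℝ) : ℂ) * ((qHermite n x q : ℝ) : ℂ))
      (∏' k : ℕ, (1 - 2 * (x : ℂ) * t * (q : ℂ) ^ k + t ^ 2 * (q : ℂ) ^ (2 * k))⁻¹) := by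
  set θ : ℝ := Real.arccos x with hθ
  set A : ℂ := t * Complex.exp (θ * Complex.I) with hA
  set B : ℂ := t * Complex.exp (-(θ * Complex.I)) with hB
  have hAe : ‖A‖ = ‖t‖ := by
    rw [hA, norm_mul, Complex.norm_exp_ofReal_mul_I θ,
      mul_one]
  have hBe : ‖B‖ = ‖t‖ := by
    have : -(↑θ * Complex.I) = (↑(-θ) : ℂ) * Complex.I := by push_cast; ring
    rw [hB, norm_mul, this,
      Complex.norm_exp_ofReal_mul_I (-θ), mul_one]
  have hAn : ‖A‖ < 1 := by rw [hAe]; exact ht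
  have hBn : ‖B‖ < 1 := by rw [hBe]; exact ht
  have hsA := euler_aux hq0 hq1 hAn
  have hsB := euler_aux hq0 hq1 hBn
  have hnA := summable_norm_aux hq0 hq1 hAn
  have hnB := summable_norm_aux hq0 hq1 hBn
  have hcauchy := hasSum_sum_range_mul_of_summable_norm hnA hnB
  -- the product
  have hcos : Real.cos θ = x := Real.cos_arccos hx1 hx2
  have hg : ∀ k : ℕ, (1 - A * (q : ℂ) ^ k) * (1 - B * (q : ℂ) ^ k)
      = 1 - 2 * (x : ℂ) * t * (q : ℂ) ^ k + t ^ 2 * (q : ℂ) ^ (2 * k) := by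
    intro k
    have hAB : A * B = t ^ 2 := by
      have h1 : Complex.exp (θ * Complex.I) * Complex.exp (-(θ * Complex.I)) = 1 := by
        rw [← Complex.exp_add, add_neg_cancel, Complex.exp_zero]
      calc A * B = t ^ 2 * (Complex.exp (θ * Complex.I) * Complex.exp (-(θ * Complex.I))) := by
            rw [hA, hB]; ring
        _ = t ^ 2 := by rw [h1, mul_one]
    have hApB : A + B = 2 * (x : ℂ) * t := by
      have h1 : Complex.exp (θ * Complex.I) + Complex.exp (-(θ * Complex.I)) = 2 * (x : ℂ) := by
        have hneg : -(↑θ * Complex.I) = (↑(-θ) : ℂ) * Complex.I := by push_cast; ring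
        rw [hneg, Complex.exp_mul_I, Complex.exp_mul_I, ← Complex.ofReal_cos,
          ← Complex.ofReal_sin, ← Complex.ofReal_cos, ← Complex.ofReal_sin, Real.cos_neg,
          Real.sin_neg, hcos]
        push_cast
        ring
      calc A + B = t * (Complex.exp (θ * Complex.I) + Complex.exp (-(θ * Complex.I))) := by
            rw [hA, hB]; ring
        _ = t * (2 * (x : ℂ)) := by rw [h1]
        _ = 2 * (x : ℂ) * t := by ring
    have : (1 - A * (q : ℂ) ^ k) * (1 - B * (q : ℂ) ^ k)
        = 1 - (A + B) * (q : ℂ) ^ k + (A * B) * ((q : ℂ) ^ k * (q : ℂ) ^ k) := by ring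
    rw [this, hApB, hAB, ← pow_add, two_mul k]
  set G : ℕ → ℂ := fun k => 1 - 2 * (x : ℂ) * t * (q : ℂ) ^ k + t ^ 2 * (q : ℂ) ^ (2 * k)
    with hG
  have hmA := multipliable_one_sub hq0 hq1 hAn
  have hmB := multipliable_one_sub hq0 hq1 hBn
  have hmG : Multipliable G := (hmA.mul hmB).congr hg
  have hPmul : (∏' k : ℕ, (1 - A * (q : ℂ) ^ k)) * (∏' k : ℕ, (1 - B * (q : ℂ) ^ k))
      = ∏' k : ℕ, G k := by
    rw [← Multipliable.tprod_mul hmA hmB]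
    exact tprod_congr hg
  have hGne : ∀ k, G k ≠ 0 := fun k => by
    rw [hG]
    simp only
    rw [← hg k]
    exact mul_ne_zero (factor_ne hq0 hq1 hAn k) (factor_ne hq0 hq1 hBn k)
  -- multipliable of inverses
  have hmGi : Multipliable (fun k => (G k)⁻¹) := by
    have hub : ∀ k : ℕ, ‖(G k)⁻¹ - 1‖
        ≤ (2 * ‖t‖ + ‖t‖ ^ 2) / ((1 - ‖t‖) * (1 - ‖t‖)) * q ^ k := by
      intro k
      have hqk1 : q ^ k ≤ 1 := pow_le_one₀ hq0 hq1.le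
      have hqknn : (0:ℝ) ≤ q ^ k := pow_nonneg hq0 k
      have hnum : ‖1 - G k‖ ≤ (2 * ‖t‖ + ‖t‖ ^ 2) * q ^ k := by
        have : (1 : ℂ) - G k = 2 * (x : ℂ) * t * (q : ℂ) ^ k - t ^ 2 * (q : ℂ) ^ (2 * k) := by
          rw [hG]; ring
        rw [this]
        have h2n : ‖(2:ℂ)‖ = 2 := by norm_num
        have e1 : ‖2 * (x : ℂ) * t * (q : ℂ) ^ k‖ ≤ 2 * ‖t‖ * q ^ k := by
          have hxle : |x| ≤ 1 := abs_le.mpr ⟨hx1, hx2⟩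
          simp only [norm_mul, norm_pow, Complex.norm_real, h2n, Real.norm_eq_abs,
            abs_of_nonneg hq0]
          nlinarith [norm_nonneg t, abs_nonneg x,
            mul_nonneg (mul_nonneg (norm_nonneg t) hqknn) (sub_nonneg.mpr hxle)]
        have e2 : ‖t ^ 2 * (q : ℂ) ^ (2 * k)‖ ≤ ‖t‖ ^ 2 * q ^ k := by
          simp only [norm_mul, norm_pow, Complex.norm_real, Real.norm_eq_abs,
            abs_of_nonneg hq0]
          have h2k : q ^ (2 * k) ≤ q ^ k := by
            rw [two_mul, pow_add]
            nlinarith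
          nlinarith [sq_nonneg ‖t‖, pow_nonneg hq0 (2 * k)]
        calc ‖2 * (x : ℂ) * t * (q : ℂ) ^ k - t ^ 2 * (q : ℂ) ^ (2 * k)‖
            ≤ ‖2 * (x : ℂ) * t * (q : ℂ) ^ k‖ + ‖t ^ 2 * (q : ℂ) ^ (2 * k)‖ := norm_sub_le _ _
          _ ≤ 2 * ‖t‖ * q ^ k + ‖t‖ ^ 2 * q ^ k := add_le_add e1 e2
          _ = (2 * ‖t‖ + ‖t‖ ^ 2) * q ^ k := by ring
      have hlow : (1 - ‖t‖) * (1 - ‖t‖) ≤ ‖G k‖ := by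
        have hGk : ‖G k‖ = ‖1 - A * (q : ℂ) ^ k‖ * ‖1 - B * (q : ℂ) ^ k‖ := by
          simp only [hG]
          rw [← hg k, norm_mul]
        rw [hGk]
        have l1 : 1 - ‖t‖ ≤ ‖1 - A * (q : ℂ) ^ k‖ := by
          have h1 : ‖A * (q : ℂ) ^ k‖ ≤ ‖t‖ := by
            rw [norm_mul, norm_pow, Complex.norm_real, Real.norm_of_nonneg hq0, hAe]
            exact mul_le_of_le_one_right (norm_nonneg t) hqk1
          have h2 := norm_sub_norm_le (1 : ℂ) (A * (q : ℂ) ^ k)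
          rw [norm_one] at h2
          linarith
        have l2 : 1 - ‖t‖ ≤ ‖1 - B * (q : ℂ) ^ k‖ := by
          have h1 : ‖B * (q : ℂ) ^ k‖ ≤ ‖t‖ := by
            rw [norm_mul, norm_pow, Complex.norm_real, Real.norm_of_nonneg hq0, hBe]
            exact mul_le_of_le_one_right (norm_nonneg t) hqk1
          have h2 := norm_sub_norm_le (1 : ℂ) (B * (q : ℂ) ^ k)
          rw [norm_one] at h2
          linarith
        have ht1 : (0:ℝ) ≤ 1 - ‖t‖ := by linarith
        exact mul_le_mul l1 l2 ht1 (norm_nonneg _)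
      have hGpos : (0:ℝ) < ‖G k‖ := norm_pos_iff.mpr (hGne k)
      have hinv : (G k)⁻¹ - 1 = (1 - G k) / G k := by
        rw [eq_div_iff (hGne k), sub_mul, inv_mul_cancel₀ (hGne k)]
        ring
      rw [hinv, norm_div]
      rw [div_le_iff₀ hGpos]
      have ht1 : (0:ℝ) < 1 - ‖t‖ := by linarith
      calc ‖1 - G k‖ ≤ (2 * ‖t‖ + ‖t‖ ^ 2) * q ^ k := hnum
        _ = (2 * ‖t‖ + ‖t‖ ^ 2) / ((1 - ‖t‖) * (1 - ‖t‖)) * q ^ k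
            * ((1 - ‖t‖) * (1 - ‖t‖)) := by
            rw [div_mul_eq_mul_div, div_mul_eq_mul_div,
              mul_div_cancel_right₀ _ (mul_pos ht1 ht1).ne']
        _ ≤ (2 * ‖t‖ + ‖t‖ ^ 2) / ((1 - ‖t‖) * (1 - ‖t‖)) * q ^ k * ‖G k‖ := by
            apply mul_le_mul_of_nonneg_left hlow
            positivity
    have hsc : Summable (fun k : ℕ => (G k)⁻¹ - 1) := by
      refine Summable.of_norm_bounded ?_ hub
      exact (summable_geometric_of_lt_one hq0 hq1).mul_left _
    have := multipliable_aux (fun k => (G k)⁻¹ - 1) hsc (fun k => by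
      have : 1 + ((G k)⁻¹ - 1) = (G k)⁻¹ := by ring
      rw [this]
      exact inv_ne_zero (hGne k))
    refine this.congr fun k => ?_
    ring
  have hinvprod : ∏' k : ℕ, (G k)⁻¹ = (∏' k : ℕ, G k)⁻¹ := by
    have h1 : (∏' k : ℕ, (G k)⁻¹) * (∏' k : ℕ, G k) = 1 := by
      rw [← Multipliable.tprod_mul hmGi hmG]
      have : (fun k => (G k)⁻¹ * G k) = fun _ : ℕ => (1 : ℂ) :=
        funext fun k => inv_mul_cancel₀ (hGne k)
      rw [this, tprod_one]
    exact eq_inv_of_mul_eq_one_left h1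
  -- assemble
  have hval : (∑' n : ℕ, A ^ n / ((qPochR q q n : ℝ) : ℂ))
      * (∑' n : ℕ, B ^ n / ((qPochR q q n : ℝ) : ℂ)) = ∏' k : ℕ, (G k)⁻¹ := by
    rw [hsA.tsum_eq, hsB.tsum_eq, hinvprod, ← hPmul, mul_inv]
  rw [hval] at hcauchy
  refine hcauchy.congr_fun fun n => ?_
  have := term_identity hq0 hq1 t θ n
  rw [hA, hB]
  rw [this]
  rfl

end Aux

/-- Corollary 1.1: wave function of the coherent state for m = 0, before normalization. -/
theorem coherent_state_m_zero (q : ℝ) (hq0 : 0 < q) (hq1 : q < 1) (z : ℂ)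
    (hz2 : (1 - q) * ‖z‖ ^ 2 < 1) (ξ : ℝ) (hξ : ξ ∈ Iq q) :
    HasSum (fun j : ℕ =>
        (starRingEnd ℂ) z ^ j * ((Real.sqrt (1 - q) : ℝ) : ℂ) ^ j
          / ((Real.sqrt (qPochR q q j) : ℝ) : ℂ) * ((phiq q j ξ : ℝ) : ℂ))
      (((Real.sqrt (Real.sqrt 2 * omegaq q (Real.sqrt 2 * ξ)) : ℝ) : ℂ)
        * ∏' k : ℕ,
            (1 - ((Real.sqrt 2 : ℝ) : ℂ) * (starRingEnd ℂ) z * (ξ : ℂ) * (q : ℂ) ^ k * ((1 - q : ℝ) : ℂ)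
              + (starRingEnd ℂ) z ^ 2 * (q : ℂ) ^ (2 * k) * ((1 - q : ℝ) : ℂ))⁻¹) := by
  have h1q : (0:ℝ) < 1 - q := by linarith
  set s : ℝ := Real.sqrt (1 - q) with hs
  set r : ℝ := Real.sqrt 2 with hr
  have hs2 : s ^ 2 = 1 - q := Real.sq_sqrt h1q.le
  have hr2 : r ^ 2 = 2 := Real.sq_sqrt (by norm_num)
  have hspos : 0 < s := Real.sqrt_pos.mpr h1q
  have hrpos : 0 < r := Real.sqrt_pos.mpr (by norm_num)
  set t : ℂ := (starRingEnd ℂ) z * (s : ℂ) with htdef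
  have htn : ‖t‖ < 1 := by
    have h1 : ‖t‖ = ‖z‖ * s := by
      simp only [htdef, norm_mul, Complex.norm_conj, Complex.norm_real, Real.norm_eq_abs]
      rw [abs_of_nonneg hspos.le]
    have h2 : ‖t‖ ^ 2 = (1 - q) * ‖z‖ ^ 2 := by
      rw [h1, mul_pow, hs2]; ring
    nlinarith [norm_nonneg t, norm_nonneg z]
  set x : ℝ := Real.sqrt ((1 - q) / 2) * ξ with hx
  have hxsr : x = s / r * ξ := by
    rw [hx, hs, hr, Real.sqrt_div h1q.le]
  have hrs : r / s * s = r := div_mul_cancel₀ r hspos.ne'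
  obtain ⟨hξ1, hξ2⟩ := hξ
  have hx1 : -1 ≤ x := by
    rw [hxsr, div_mul_eq_mul_div, le_div_iff₀ hrpos]
    nlinarith [mul_lt_mul_of_pos_left hξ1 hspos]
  have hx2 : x ≤ 1 := by
    rw [hxsr, div_mul_eq_mul_div, div_le_one hrpos]
    nlinarith [mul_lt_mul_of_pos_left hξ2 hspos]
  have hgen := (genfun hq0.le hq1 htn hx1 hx2).mul_left
    ((Real.sqrt (Real.sqrt 2 * omegaq q (Real.sqrt 2 * ξ)) : ℝ) : ℂ)
  set W : ℝ := Real.sqrt 2 * omegaq q (Real.sqrt 2 * ξ) with hW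
  have hfactor : ∀ k : ℕ,
      (1 - 2 * (x : ℂ) * t * (q : ℂ) ^ k + t ^ 2 * (q : ℂ) ^ (2 * k))
      = (1 - ((Real.sqrt 2 : ℝ) : ℂ) * (starRingEnd ℂ) z * (ξ : ℂ) * (q : ℂ) ^ k * ((1 - q : ℝ) : ℂ)
          + (starRingEnd ℂ) z ^ 2 * (q : ℂ) ^ (2 * k) * ((1 - q : ℝ) : ℂ)) := by
    intro k
    have hs2c : (s : ℂ) ^ 2 = 1 - (q : ℂ) := by
      rw [← Complex.ofReal_pow, hs2]; push_cast; ring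
    have hr2c : (r : ℂ) ^ 2 = 2 := by
      rw [← Complex.ofReal_pow, hr2]; norm_num
    have hxc : (x : ℂ) = (s : ℂ) * (r : ℂ) * (ξ : ℂ) / 2 := by
      have hxr : x = s * r * ξ / 2 := by
        rw [hxsr]
        have : s / r = s * r / 2 := by
          rw [div_eq_div_iff hrpos.ne' (by norm_num : (2:ℝ) ≠ 0)]
          linear_combination (-s) * hr2
        rw [this]; ring
      rw [hxr]; push_cast; ring
    rw [htdef, hxc]
    have hq1c : ((1 - q : ℝ) : ℂ) = 1 - (q : ℂ) := by push_cast; ring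
    rw [hq1c, ← hr]
    linear_combination ((starRingEnd ℂ) z ^ 2 * (q : ℂ) ^ (2 * k)
      - (r : ℂ) * (starRingEnd ℂ) z * (ξ : ℂ) * (q : ℂ) ^ k) * hs2c
  have hprodeq : (∏' k : ℕ, (1 - 2 * (x : ℂ) * t * (q : ℂ) ^ k + t ^ 2 * (q : ℂ) ^ (2 * k))⁻¹)
      = ∏' k : ℕ,
          (1 - ((Real.sqrt 2 : ℝ) : ℂ) * (starRingEnd ℂ) z * (ξ : ℂ) * (q : ℂ) ^ k * ((1 - q : ℝ) : ℂ)
            + (starRingEnd ℂ) z ^ 2 * (q : ℂ) ^ (2 * k) * ((1 - q : ℝ) : ℂ))⁻¹ :=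
    tprod_congr fun k => by rw [hfactor k]
  rw [hprodeq] at hgen
  refine hgen.congr_fun fun j => ?_
  have hPj : 0 < qPochR q q j := qPochR_pos hq0.le hq1 j
  have hsqrtP : Real.sqrt (W / qPochR q q j) = Real.sqrt W / Real.sqrt (qPochR q q j) :=
    Real.sqrt_div' W hPj.le
  have hmulself : ((Real.sqrt (qPochR q q j) : ℝ) : ℂ) * ((Real.sqrt (qPochR q q j) : ℝ) : ℂ)
      = ((qPochR q q j : ℝ) : ℂ) := by
    rw [← Complex.ofReal_mul, Real.mul_self_sqrt hPj.le]
  have hsqPne : ((Real.sqrt (qPochR q q j) : ℝ) : ℂ) ≠ 0 := by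
    rw [Complex.ofReal_ne_zero]
    exact (Real.sqrt_pos.mpr hPj).ne'
  have hphi : phiq q j ξ = Real.sqrt W / Real.sqrt (qPochR q q j) * qHermite j x q := by
    rw [phiq, ← hW, ← hx, hsqrtP]
  rw [hphi]
  rw [htdef]
  push_cast
  rw [mul_pow]
  have hPne : ((qPochR q q j : ℝ) : ℂ) ≠ 0 := Complex.ofReal_ne_zero.mpr hPj.ne'
  field_simp
  linear_combination (-((starRingEnd ℂ) z ^ j * ((s : ℝ) : ℂ) ^ j * ((Real.sqrt W : ℝ) : ℂ)
    * ((qHermite j x q : ℝ) : ℂ))) * hmulself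
end
end

section
/- Let m,j∈ℕ and z∈ℂ. Then lim_{q→1⁻} h_j^{m,q}(z) = (-1)^{min(m,j)} · (min(m,j))! / √(m!·j!) · c_{m,j}(z) · L_{min(m,j)}^{(|m-j|)}(|z|²), where c_{m,j}(z) = conj(z)^{m-j} if j ≤ m and c_{m,j}(z) = z^{j-m} if j > m, and L_n^{(α)} is the Laguerre polynomial L_n^{(α)}(x) = ∑_{k=0}^n (-1)^k/k! · binom(n+α, n-k) · x^k. (Consistency of the q-deformed coefficients: lim_{q→1} h_j^{m,q}(z) = h_j^m(z).) -/
open Filter Finset MeasureTheory Topology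

noncomputable section

/-- The Laguerre polynomial `L_n^{(α)}(x)` with nonnegative integer parameter `α`. -/
def laguerreL (n α : ℕ) (x : ℝ) : ℝ :=
  ∑ k ∈ Finset.range (n + 1), (-1 : ℝ) ^ k / (k.factorial : ℝ) * ((n + α).choose (n - k) : ℝ) * x ^ k

namespace HAux

def SS (a : ℕ) (q : ℂ) : ℂ := ∑ i ∈ Finset.range a, q ^ i
def SSr (a : ℕ) (q : ℝ) : ℝ := ∑ i ∈ Finset.range a, q ^ i
def TT (N : ℕ) (q : ℂ) : ℂ := ∏ k ∈ Finset.range N, SS (k+1) q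
def TTr (N : ℕ) (q : ℝ) : ℝ := ∏ k ∈ Finset.range N, SSr (k+1) q
def UU (n k : ℕ) (q : ℂ) : ℂ := ∏ i ∈ Finset.range k, SS (n-i) q
def VV (d k : ℕ) (q : ℂ) : ℂ := ∏ i ∈ Finset.range k, SS (d+1+i) q

lemma SS_cast (a : ℕ) (q : ℝ) : ((SSr a q : ℝ) : ℂ) = SS a (q : ℂ) := by simp [SS, SSr]
lemma TT_cast (N : ℕ) (q : ℝ) : ((TTr N q : ℝ) : ℂ) = TT N (q : ℂ) := by
  simp [TT, TTr, ← SS_cast]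
lemma one_sub_mul_SS (a : ℕ) (q : ℂ) : (1-q) * SS a q = 1 - q^a := by
  have := geom_sum_mul q a
  simpa [SS] using by linear_combination -this
lemma SS_one (a : ℕ) : SS a 1 = a := by simp [SS]
lemma SSr_one (a : ℕ) : SSr a 1 = a := by simp [SSr]
lemma SSr_pos (a : ℕ) (q : ℝ) (ha : 0 < a) (hq : 0 < q) : 0 < SSr a q :=
  Finset.sum_pos (fun i _ => by positivity) (by simpa using ha.ne')
lemma TTr_pos (N : ℕ) (q : ℝ) (hq : 0 < q) : 0 < TTr N q :=
  Finset.prod_pos fun i _ => SSr_pos _ _ (Nat.succ_pos i) hq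
lemma SS_ne (a : ℕ) (q : ℝ) (ha : 0 < a) (hq : 0 < q) : SS a (q:ℂ) ≠ 0 := by
  rw [← SS_cast]
  exact_mod_cast (SSr_pos a q ha hq).ne'
lemma TT_ne (N : ℕ) (q : ℝ) (hq : 0 < q) : TT N (q:ℂ) ≠ 0 :=
  Finset.prod_ne_zero_iff.mpr fun i _ => SS_ne _ _ (Nat.succ_pos i) hq
lemma VV_ne (d k : ℕ) (q : ℝ) (hq : 0 < q) : VV d k (q:ℂ) ≠ 0 :=
  Finset.prod_ne_zero_iff.mpr fun i _ => SS_ne _ _ (by omega) hq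
lemma TT_one (N : ℕ) : TT N 1 = N.factorial := by
  induction N with
  | zero => simp [TT]
  | succ N ih =>
      rw [TT, Finset.prod_range_succ, ← TT, ih, SS_one]
      push_cast [Nat.factorial_succ]; ring
lemma TTr_one (N : ℕ) : TTr N 1 = N.factorial := by
  have := TT_one N
  rw [show ((1:ℂ)) = ((1:ℝ):ℂ) by norm_num, ← TT_cast] at this
  exact_mod_cast this
lemma UU_one (n k : ℕ) : UU n k 1 = (n.descFactorial k : ℂ) := by
  rw [UU, Nat.descFactorial_eq_prod_range]
  push_cast
  exact Finset.prod_congr rfl fun i _ => SS_one _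
lemma asc_eq_prod (d k : ℕ) : (d+1).ascFactorial k = ∏ i ∈ range k, (d+1+i) := by
  induction k with
  | zero => simp [Nat.ascFactorial]
  | succ k ih => rw [Finset.prod_range_succ, ← ih, Nat.ascFactorial, mul_comm]
lemma VV_one (d k : ℕ) : VV d k 1 = ((d+1).ascFactorial k : ℂ) := by
  rw [VV, Finset.prod_congr rfl fun i _ => SS_one (d+1+i), ← Nat.cast_prod, ← asc_eq_prod]

lemma qPochC_eq (q : ℂ) (N : ℕ) : qPochC q q N = (1-q)^N * TT N q := by
  rw [qPochC, TT,
    ← Finset.prod_mul_distrib.symm.trans (Finset.prod_congr rfl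
      (fun k _ => (one_sub_mul_SS (k+1) q).trans (by rw [pow_succ'])))]
  simp [Finset.prod_const]
lemma qPochR_eq (q : ℝ) (N : ℕ) : qPochR q q N = (1-q)^N * TTr N q := by
  have := qPochC_eq (q:ℂ) N
  rw [← TT_cast] at this
  have h : ((qPochR q q N : ℝ) : ℂ) = qPochC (q:ℂ) (q:ℂ) N := by simp [qPochR, qPochC]
  exact_mod_cast h.trans this
lemma qPochC_aq (q : ℂ) (d k : ℕ) : qPochC (q^d * q) q k = (1-q)^k * VV d k q := by
  rw [qPochC, VV,
    ← Finset.prod_mul_distrib.symm.trans (Finset.prod_congr rfl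
      (fun i _ => (one_sub_mul_SS (d+1+i) q).trans (by rw [pow_add, pow_add, pow_one])))]
  simp [Finset.prod_const]
lemma qPochC_inv (q : ℂ) (hq : q ≠ 0) (n k : ℕ) (hk : k ≤ n) :
    qPochC (q ^ (-(n:ℤ))) q k
      = (-1)^k * q^(∑ i ∈ Finset.range k, i) * (1-q)^k * UU n k q / q^(n*k) := by
  rw [qPochC, UU]
  have step : ∀ i ∈ range k, (1 - q ^ (-(n:ℤ)) * q ^ i)
      = (-1) * q^i * (1-q) * SS (n-i) q / q^n := by
    intro i hi
    have hin : i < n := lt_of_lt_of_le (Finset.mem_range.mp hi) hk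
    have h1 : q ^ n = q ^ i * q ^ (n - i) := by rw [← pow_add]; congr 1; omega
    have h2 : (q:ℂ) ^ (-(n:ℤ)) = (q^n)⁻¹ := by rw [zpow_neg, zpow_natCast]
    have h3 := one_sub_mul_SS (n-i) q
    have h4 : 1 - (q^n)⁻¹ * q^i = (q^n - q^i)/q^n := by field_simp
    rw [h2, h4]
    congr 1
    linear_combination h1 + q^i * h3
  rw [Finset.prod_congr rfl step, Finset.prod_div_distrib, Finset.prod_const, ← pow_mul,
    Finset.prod_mul_distrib, Finset.prod_mul_distrib, Finset.prod_mul_distrib,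
    Finset.prod_const, Finset.prod_const, Finset.prod_pow_eq_pow_sum]
  simp only [Finset.card_range]

lemma wallP_eq (q : ℝ) (h0 : 0 < q) (h1 : q < 1) (n d : ℕ) (x : ℝ) :
    wallP n (((1-q) * x : ℝ) : ℂ) ((q:ℂ)^d) (q:ℂ)
      = ∑ k ∈ Finset.range (n+1),
          (-1:ℂ)^k * (q:ℂ)^(∑ i ∈ Finset.range k, i) * (q:ℂ)^k * UU n k (q:ℂ) * (x:ℂ)^k
            / ((q:ℂ)^(n*k) * VV d k (q:ℂ) * TT k (q:ℂ)) := by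
  have hq : (q:ℂ) ≠ 0 := by exact_mod_cast h0.ne'
  have hq1 : (1:ℂ) - (q:ℂ) ≠ 0 := by
    intro h
    have : (q:ℂ) = 1 := by linear_combination -h
    exact absurd (by exact_mod_cast this) h1.ne
  refine Finset.sum_congr rfl fun k hk => ?_
  have hkn : k ≤ n := Nat.lt_succ_iff.mp (Finset.mem_range.mp hk)
  rw [qPochC_inv (q:ℂ) hq n k hkn, qPochC_aq, qPochC_eq]
  have hV := VV_ne d k q h0
  have hT := TT_ne k q h0
  push_cast
  rw [show ((q:ℂ) * ((1-(q:ℂ)) * (x:ℂ)))^k = (q:ℂ)^k * (1-(q:ℂ))^k * (x:ℂ)^k by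
    rw [mul_pow, mul_pow]; ring]
  rw [div_div, div_mul_eq_mul_div, div_eq_div_iff (by
      exact mul_ne_zero (pow_ne_zero _ hq) (mul_ne_zero (mul_ne_zero (pow_ne_zero _ hq1) hV)
        (mul_ne_zero (pow_ne_zero _ hq1) hT)))
    (mul_ne_zero (mul_ne_zero (pow_ne_zero _ hq) hV) hT)]
  ring

end HAux

namespace HAux

lemma sqrt_pow' (a : ℝ) (n : ℕ) (h : 0 ≤ a) : Real.sqrt (a^n) = (Real.sqrt a)^n := by
  induction n with
  | zero => simp
  | succ n ih => rw [pow_succ, pow_succ, Real.sqrt_mul (by positivity), ih]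

lemma hcoef_eq (m j : ℕ) (z : ℂ) (q : ℝ) (h0 : 0 < q) (h1 : q < 1) :
    hcoef q m j z =
      (-1:ℂ)^(min m j) * (q:ℂ)^((min m j).choose 2)
        * TT (min m j + Nat.dist m j) (q:ℂ)
        / (TT (Nat.dist m j) (q:ℂ) * ((Real.sqrt (q^(m*j) * TTr m q * TTr j q) : ℝ):ℂ))
        * (if j ≤ m then (starRingEnd ℂ) z ^ (m-j) else z^(j-m))
        * ∑ k ∈ Finset.range (min m j + 1),
            (-1:ℂ)^k * (q:ℂ)^(∑ i ∈ Finset.range k, i) * (q:ℂ)^k * UU (min m j) k (q:ℂ)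
              * ((‖z‖^2 : ℝ):ℂ)^k
              / ((q:ℂ)^((min m j)*k) * VV (Nat.dist m j) k (q:ℂ) * TT k (q:ℂ)) := by
  set n := min m j
  set d := Nat.dist m j
  have hmax : max m j = n + d := by
    rcases le_total m j with h | h <;> simp [n, d, Nat.dist, max_eq_right, min_eq_left] <;> omega
  have hmj : m + j = 2*n + d := by
    rcases le_total m j with h | h <;> simp [n, d, Nat.dist] <;> omega
  have hqlt : (0:ℝ) ≤ 1 - q := by linarith
  have hs2 : ((Real.sqrt (1-q) : ℝ) : ℂ)^2 = 1 - (q:ℂ) := by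
    rw [← Complex.ofReal_pow, Real.sq_sqrt hqlt]; push_cast; ring
  have hsne : ((Real.sqrt (1-q) : ℝ) : ℂ) ≠ 0 := by
    simp only [ne_eq, Complex.ofReal_eq_zero]
    exact (Real.sqrt_pos.mpr (by linarith)).ne'
  have hRpos : 0 < Real.sqrt (q^(m*j) * TTr m q * TTr j q) := by
    have := TTr_pos m q h0
    have := TTr_pos j q h0
    positivity
  have hRne : ((Real.sqrt (q^(m*j) * TTr m q * TTr j q) : ℝ):ℂ) ≠ 0 := by
    simp only [ne_eq, Complex.ofReal_eq_zero]
    exact hRpos.ne'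
  have hTdne : TT d (q:ℂ) ≠ 0 := TT_ne d q h0
  have hTnd : TT (n+d) (q:ℂ) ≠ 0 := TT_ne _ q h0
  -- split the inner sqrt
  have hsqrt : Real.sqrt (q ^ (m * j) * qPochR q q m * qPochR q q j)
      = (Real.sqrt (1-q))^(m+j) * Real.sqrt (q^(m*j) * TTr m q * TTr j q) := by
    rw [qPochR_eq, qPochR_eq,
      show q ^ (m*j) * ((1-q)^m * TTr m q) * ((1-q)^j * TTr j q)
        = (1-q)^(m+j) * (q^(m*j) * TTr m q * TTr j q) by rw [pow_add]; ring,
      Real.sqrt_mul (by positivity), sqrt_pow' _ _ hqlt]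
  rw [hcoef, wallP_eq q h0 h1 n d (‖z‖^2), hmax, hsqrt, qPochC_eq, qPochC_eq]
  congr 1
  congr 1
  push_cast
  rw [show (1:ℂ) - (q:ℂ) = ((Real.sqrt (1-q):ℝ):ℂ)^2 from hs2.symm]
  rw [div_eq_div_iff (by
      refine mul_ne_zero (mul_ne_zero ?_ hTdne) ?_
      · exact pow_ne_zero _ (pow_ne_zero _ hsne)
      · exact mul_ne_zero (pow_ne_zero _ hsne) hRne)
    (mul_ne_zero hTdne hRne)]
  rw [show m + j = 2*n + d from hmj]
  ring
end HAux

namespace HAux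
open Filter Topology

lemma contSS (a : ℕ) : Continuous fun q : ℂ => SS a q :=
  continuous_finset_sum _ fun i _ => continuous_pow i
lemma contTT (N : ℕ) : Continuous fun q : ℂ => TT N q :=
  continuous_finset_prod _ fun i _ => contSS _
lemma contUU (n k : ℕ) : Continuous fun q : ℂ => UU n k q :=
  continuous_finset_prod _ fun i _ => contSS _
lemma contVV (d k : ℕ) : Continuous fun q : ℂ => VV d k q :=
  continuous_finset_prod _ fun i _ => contSS _
lemma contSSr (a : ℕ) : Continuous fun q : ℝ => SSr a q :=
  continuous_finset_sum _ fun i _ => continuous_pow i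
lemma contTTr (N : ℕ) : Continuous fun q : ℝ => TTr N q :=
  continuous_finset_prod _ fun i _ => contSSr _

lemma t_coe : Tendsto (fun q : ℝ => (q:ℂ)) (𝓝[<] (1:ℝ)) (𝓝 1) := by
  have := (Complex.continuous_ofReal.tendsto 1).mono_left (nhdsWithin_le_nhds (s := Set.Iio (1:ℝ)))
  simpa using this

lemma t_comp (F : ℂ → ℂ) (hF : Continuous F) :
    Tendsto (fun q : ℝ => F (q:ℂ)) (𝓝[<] (1:ℝ)) (𝓝 (F 1)) :=
  (hF.tendsto 1).comp t_coe

end HAux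

namespace HAux

lemma natkey (n d k : ℕ) (hk : k ≤ n) :
    (n+d).factorial * n.descFactorial k
      = n.factorial * (n+d).choose (n-k) * (d.factorial * (d+1).ascFactorial k) := by
  have h1 : d.factorial * (d+1).ascFactorial k = (d+k).factorial :=
    Nat.factorial_mul_ascFactorial d k
  have h2 : (n-k).factorial * n.descFactorial k = n.factorial :=
    Nat.factorial_mul_descFactorial hk
  have h3 : (n+d).choose (n-k) * (n-k).factorial * (d+k).factorial = (n+d).factorial := by
    have := Nat.choose_mul_factorial_mul_factorial (show n-k ≤ n+d by omega)
    rwa [show n+d-(n-k) = d+k by omega] at this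
  apply Nat.eq_of_mul_eq_mul_left (Nat.factorial_pos (n-k))
  calc (n-k).factorial * ((n+d).factorial * n.descFactorial k)
      = (n+d).factorial * ((n-k).factorial * n.descFactorial k) := by ring
    _ = (n+d).factorial * n.factorial := by rw [h2]
    _ = ((n+d).choose (n-k) * (n-k).factorial * (d+k).factorial) * n.factorial := by rw [h3]
    _ = (n-k).factorial * (n.factorial * (n+d).choose (n-k) * (d+k).factorial) := by ring
    _ = _ := by rw [← h1]

lemma perterm (n d k : ℕ) (hk : k ≤ n) (R X : ℂ) (hR : R ≠ 0) :
    (-1:ℂ)^n * 1 * ((n+d).factorial : ℂ) / ((d.factorial : ℂ) * R)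
        * ((-1:ℂ)^k * 1 * 1 * (n.descFactorial k : ℂ) * X^k
            / (1 * ((d+1).ascFactorial k : ℂ) * (k.factorial : ℂ)))
      = (-1:ℂ)^n * (n.factorial : ℂ) / R
        * ((-1:ℂ)^k / (k.factorial : ℂ) * ((n+d).choose (n-k) : ℂ) * X^k) := by
  have keyC : ((n+d).factorial : ℂ) * (n.descFactorial k : ℂ)
      = (n.factorial : ℂ) * ((n+d).choose (n-k) : ℂ)
          * ((d.factorial : ℂ) * ((d+1).ascFactorial k : ℂ)) := by
    exact_mod_cast congrArg (Nat.cast : ℕ → ℂ) (natkey n d k hk)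
  have h1 : (d.factorial : ℂ) ≠ 0 := Nat.cast_ne_zero.mpr d.factorial_pos.ne'
  have h2 : ((d+1).ascFactorial k : ℂ) ≠ 0 := Nat.cast_ne_zero.mpr (Nat.ascFactorial_pos d k).ne'
  have h3 : (k.factorial : ℂ) ≠ 0 := Nat.cast_ne_zero.mpr k.factorial_pos.ne'
  field_simp
  linear_combination X^k * keyC

end HAux

namespace HAux

lemma value_eq (n d : ℕ) (c : ℂ) (x : ℝ) (R : ℂ) (hR : R ≠ 0) :
    (-1:ℂ)^n * 1 * ((n+d).factorial : ℂ) / ((d.factorial:ℂ) * R) * c *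
      ∑ k ∈ Finset.range (n+1),
        (-1:ℂ)^k * 1 * 1 * (n.descFactorial k : ℂ) * ((x:ℝ):ℂ)^k
          / (1 * ((d+1).ascFactorial k :ℂ) * (k.factorial:ℂ))
    = (-1:ℂ)^n * ((n.factorial:ℝ):ℂ) / R * c * ((laguerreL n d x : ℝ):ℂ) := by
  have hlag : ((laguerreL n d x : ℝ):ℂ)
      = ∑ k ∈ Finset.range (n+1),
          (-1:ℂ)^k / (k.factorial:ℂ) * (((n+d).choose (n-k)):ℂ) * ((x:ℝ):ℂ)^k := by
    rw [laguerreL]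
    push_cast
    rfl
  rw [hlag]
  have hsum : ((-1:ℂ)^n * 1 * ((n+d).factorial : ℂ) / ((d.factorial:ℂ) * R)) *
      (∑ k ∈ Finset.range (n+1),
        (-1:ℂ)^k * 1 * 1 * (n.descFactorial k : ℂ) * ((x:ℝ):ℂ)^k
          / (1 * ((d+1).ascFactorial k :ℂ) * (k.factorial:ℂ)))
      = ((-1:ℂ)^n * (n.factorial : ℂ) / R) *
        ∑ k ∈ Finset.range (n+1),
          (-1:ℂ)^k / (k.factorial:ℂ) * (((n+d).choose (n-k)):ℂ) * ((x:ℝ):ℂ)^k := by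
    rw [Finset.mul_sum, Finset.mul_sum]
    exact Finset.sum_congr rfl fun k hk =>
      perterm n d k (Nat.lt_succ_iff.mp (Finset.mem_range.mp hk)) R _ hR
  push_cast at hsum ⊢
  linear_combination c * hsum

end HAux


open HAux in
/-- Consistency of the q-deformed coefficients: `lim_{q→1⁻} h_j^{m,q}(z) = h_j^m(z)`. -/
theorem hcoef_tendsto_classical (m j : ℕ) (z : ℂ) :
    Tendsto (fun q : ℝ => hcoef q m j z) (𝓝[<] (1 : ℝ))
      (𝓝 ((-1 : ℂ) ^ (min m j) * (((min m j).factorial : ℝ) : ℂ)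
        / ((Real.sqrt ((m.factorial : ℝ) * (j.factorial : ℝ)) : ℝ) : ℂ)
        * (if j ≤ m then (starRingEnd ℂ) z ^ (m - j) else z ^ (j - m))
        * ((laguerreL (min m j) (Nat.dist m j) (‖z‖ ^ 2) : ℝ) : ℂ))) := by

  set n := min m j with hn
  set d := Nat.dist m j with hd
  set c := (if j ≤ m then (starRingEnd ℂ) z ^ (m - j) else z ^ (j - m)) with hc
  set x : ℝ := ‖z‖ ^ 2 with hx
  set l := 𝓝[<] (1:ℝ) with hl
  -- eventual equality
  have hmem : Set.Ioo (0:ℝ) 1 ∈ l := by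
    rw [hl]
    exact Ioo_mem_nhdsLT_of_mem (by constructor <;> norm_num)
  have heq : ∀ᶠ q in l, hcoef q m j z
      = (-1:ℂ)^n * (q:ℂ)^(n.choose 2) * TT (n + d) (q:ℂ)
          / (TT d (q:ℂ) * ((Real.sqrt (q^(m*j) * TTr m q * TTr j q) : ℝ):ℂ))
          * c
          * ∑ k ∈ Finset.range (n + 1),
              (-1:ℂ)^k * (q:ℂ)^(∑ i ∈ Finset.range k, i) * (q:ℂ)^k * UU n k (q:ℂ)
                * ((x:ℝ):ℂ)^k
                / ((q:ℂ)^(n*k) * VV d k (q:ℂ) * TT k (q:ℂ)) := by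
    filter_upwards [hmem] with q hq
    exact hcoef_eq m j z q hq.1 hq.2
  rw [tendsto_congr' heq]
  -- basic limits
  have hpow : ∀ e : ℕ, Tendsto (fun q:ℝ => (q:ℂ)^e) l (𝓝 1) := fun e => by
    simpa using t_comp (fun w => w^e) (continuous_pow e)
  have hTT : ∀ N : ℕ, Tendsto (fun q:ℝ => TT N (q:ℂ)) l (𝓝 (N.factorial : ℂ)) := fun N => by
    simpa [TT_one] using t_comp (TT N) (contTT N)
  have hUU : ∀ k, Tendsto (fun q:ℝ => UU n k (q:ℂ)) l (𝓝 (n.descFactorial k : ℂ)) := fun k => by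
    simpa [UU_one] using t_comp (UU n k) (contUU n k)
  have hVV : ∀ k, Tendsto (fun q:ℝ => VV d k (q:ℂ)) l (𝓝 ((d+1).ascFactorial k : ℂ)) := fun k => by
    simpa [VV_one] using t_comp (VV d k) (contVV d k)
  have hRr : Tendsto (fun q:ℝ => Real.sqrt (q^(m*j) * TTr m q * TTr j q)) l
      (𝓝 (Real.sqrt ((m.factorial : ℝ) * (j.factorial : ℝ)))) := by
    have hcont : Continuous fun q:ℝ => Real.sqrt (q^(m*j) * TTr m q * TTr j q) :=
      Real.continuous_sqrt.comp (((continuous_pow (m*j)).mul (contTTr m)).mul (contTTr j))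
    have := (hcont.tendsto 1).mono_left (nhdsWithin_le_nhds (s := Set.Iio (1:ℝ)))
    simpa [TTr_one] using this
  have hR : Tendsto (fun q:ℝ => ((Real.sqrt (q^(m*j) * TTr m q * TTr j q) : ℝ):ℂ)) l
      (𝓝 ((Real.sqrt ((m.factorial : ℝ) * (j.factorial : ℝ)) : ℝ):ℂ)) :=
    (Complex.continuous_ofReal.tendsto _).comp hRr
  have hRne : ((Real.sqrt ((m.factorial : ℝ) * (j.factorial : ℝ)) : ℝ):ℂ) ≠ 0 := by
    simp only [ne_eq, Complex.ofReal_eq_zero]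
    positivity
  have hfacne : ∀ N : ℕ, (N.factorial : ℂ) ≠ 0 := fun N =>
    Nat.cast_ne_zero.mpr N.factorial_pos.ne'
  -- assemble
  have hnum : Tendsto (fun q:ℝ => (-1:ℂ)^n * (q:ℂ)^(n.choose 2) * TT (n + d) (q:ℂ)) l
      (𝓝 ((-1:ℂ)^n * 1 * ((n+d).factorial : ℂ))) :=
    (tendsto_const_nhds.mul (hpow _)).mul (hTT (n+d))
  have hden : Tendsto (fun q:ℝ => TT d (q:ℂ) * ((Real.sqrt (q^(m*j) * TTr m q * TTr j q) : ℝ):ℂ)) l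
      (𝓝 ((d.factorial : ℂ) * ((Real.sqrt ((m.factorial : ℝ) * (j.factorial : ℝ)) : ℝ):ℂ))) :=
    (hTT d).mul hR
  have hdenne : ((d.factorial : ℂ) * ((Real.sqrt ((m.factorial : ℝ) * (j.factorial : ℝ)) : ℝ):ℂ)) ≠ 0 :=
    mul_ne_zero (hfacne d) hRne
  have hterm : ∀ k ∈ Finset.range (n+1),
      Tendsto (fun q:ℝ => (-1:ℂ)^k * (q:ℂ)^(∑ i ∈ Finset.range k, i) * (q:ℂ)^k * UU n k (q:ℂ)
          * ((x:ℝ):ℂ)^k / ((q:ℂ)^(n*k) * VV d k (q:ℂ) * TT k (q:ℂ))) l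
        (𝓝 ((-1:ℂ)^k * 1 * 1 * (n.descFactorial k : ℂ) * ((x:ℝ):ℂ)^k
            / (1 * ((d+1).ascFactorial k : ℂ) * (k.factorial : ℂ)))) := by
    intro k _
    refine Tendsto.div ?_ ?_ ?_
    · exact ((((tendsto_const_nhds.mul (hpow _)).mul (hpow k)).mul (hUU k)).mul tendsto_const_nhds)
    · exact ((hpow (n*k)).mul (hVV k)).mul (hTT k)
    · refine mul_ne_zero (mul_ne_zero one_ne_zero ?_) (hfacne k)
      exact Nat.cast_ne_zero.mpr (Nat.ascFactorial_pos d k).ne'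
  have hsum := tendsto_finset_sum (Finset.range (n+1)) hterm
  have hall := ((hnum.div hden hdenne).mul (tendsto_const_nhds (x := c))).mul hsum
  rw [show ((-1 : ℂ) ^ n * ((n.factorial : ℝ) : ℂ)
        / ((Real.sqrt ((m.factorial : ℝ) * (j.factorial : ℝ)) : ℝ) : ℂ)
        * c * ((laguerreL n d x : ℝ) : ℂ))
      = (-1:ℂ)^n * 1 * ((n+d).factorial : ℂ)
          / ((d.factorial : ℂ) * ((Real.sqrt ((m.factorial : ℝ) * (j.factorial : ℝ)) : ℝ):ℂ)) * c *
          ∑ k ∈ Finset.range (n+1),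
            (-1:ℂ)^k * 1 * 1 * (n.descFactorial k : ℂ) * ((x:ℝ):ℂ)^k
              / (1 * ((d+1).ascFactorial k :ℂ) * (k.factorial:ℂ))
      from (value_eq n d c x _ hRne).symm]
  exact hall
end
end

section
/- Let z∈ℂ and ξ∈ℝ. Then lim_{q→1⁻} ∏_{k=0}^∞ ( 1 - √2·z·ξ·q^k(1-q) + z²·q^{2k}(1-q) )^{-1} = exp( √2·ξ·z - z²/2 ), where for each q sufficiently close to 1 the infinite product converges and is nonzero. -/
open Filter Finset MeasureTheory Topology

noncomputable section

/-- The deviation of each factor from 1. -/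
def dTerm (z : ℂ) (ξ q : ℝ) (k : ℕ) : ℂ :=
  -(((Real.sqrt 2 : ℝ) : ℂ) * z * (ξ : ℂ) * (q : ℂ) ^ k * ((1 - q : ℝ) : ℂ))
    + z ^ 2 * (q : ℂ) ^ (2 * k) * ((1 - q : ℝ) : ℂ)

/-- The error term. -/
def Eterm (z : ℂ) (ξ q : ℝ) : ℂ :=
  ∑' k : ℕ, (Complex.log (1 + dTerm z ξ q k) - dTerm z ξ q k)

lemma key (z : ℂ) (ξ : ℝ) (q : ℝ) (hq0 : 0 < q) (hq1 : q < 1)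
    (hsmall : (Real.sqrt 2 * ‖z‖ * |ξ| + ‖z‖ ^ 2) * (1 - q) ≤ 1 / 2) :
    Multipliable (fun k : ℕ => (1 + dTerm z ξ q k)⁻¹) ∧
    (∏' k : ℕ, (1 + dTerm z ξ q k)⁻¹)
      = Complex.exp (((Real.sqrt 2 : ℝ) : ℂ) * (ξ : ℂ) * z - z ^ 2 / (1 + (q : ℂ))
          - Eterm z ξ q) ∧
    ‖Eterm z ξ q‖ ≤ (Real.sqrt 2 * ‖z‖ * |ξ| + ‖z‖ ^ 2) ^ 2 * (1 - q) := by
  set C : ℝ := Real.sqrt 2 * ‖z‖ * |ξ| + ‖z‖ ^ 2 with hCdef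
  have hC0 : 0 ≤ C := by positivity
  have h1q : 0 < 1 - q := by linarith
  have hqk1 : ∀ k : ℕ, q ^ k ≤ 1 := fun k => pow_le_one₀ hq0.le hq1.le
  have hqk0 : ∀ k : ℕ, 0 ≤ q ^ k := fun k => pow_nonneg hq0.le k
  have hd : ∀ k, ‖dTerm z ξ q k‖ ≤ C * (1 - q) * q ^ k := by
    intro k
    have h2k : q ^ (2 * k) ≤ q ^ k := by
      rw [two_mul, pow_add]
      nlinarith [hqk0 k, hqk1 k]
    have h2k0 : 0 ≤ q ^ (2 * k) := pow_nonneg hq0.le _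
    calc ‖dTerm z ξ q k‖
        ≤ ‖-(((Real.sqrt 2 : ℝ) : ℂ) * z * (ξ : ℂ) * (q : ℂ) ^ k * ((1 - q : ℝ) : ℂ))‖
            + ‖z ^ 2 * (q : ℂ) ^ (2 * k) * ((1 - q : ℝ) : ℂ)‖ := norm_add_le _ _
      _ = Real.sqrt 2 * ‖z‖ * |ξ| * q ^ k * (1 - q) + ‖z‖ ^ 2 * q ^ (2 * k) * (1 - q) := by
          rw [norm_neg]
          simp only [norm_mul, norm_pow, Complex.norm_real, Real.norm_eq_abs]
          rw [abs_of_nonneg hq0.le, abs_of_nonneg h1q.le,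
            abs_of_nonneg (Real.sqrt_nonneg 2)]
      _ ≤ C * (1 - q) * q ^ k := by
          rw [hCdef]
          have h3 := mul_le_mul_of_nonneg_left h2k (mul_nonneg (sq_nonneg ‖z‖) h1q.le)
          nlinarith [h3]
  have hdhalf : ∀ k, ‖dTerm z ξ q k‖ ≤ 1 / 2 := by
    intro k
    refine (hd k).trans ?_
    nlinarith [hqk1 k, hqk0 k]
  have hne : ∀ k, (1 : ℂ) + dTerm z ξ q k ≠ 0 := by
    intro k h
    have hv : dTerm z ξ q k = -1 := by linear_combination h
    have h2 := hdhalf k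
    rw [hv] at h2
    norm_num at h2
  have hgeom : Summable (fun k : ℕ => C * (1 - q) * q ^ k) :=
    (summable_geometric_of_lt_one hq0.le hq1).mul_left _
  have hslog : Summable (fun k => Complex.log (1 + dTerm z ξ q k)) := by
    refine Summable.of_norm_bounded (hgeom.mul_left (3 / 2)) fun k => ?_
    calc ‖Complex.log (1 + dTerm z ξ q k)‖ ≤ (3 / 2) * ‖dTerm z ξ q k‖ :=
          Complex.norm_log_one_add_half_le_self (hdhalf k)
      _ ≤ (3 / 2) * (C * (1 - q) * q ^ k) :=
          mul_le_mul_of_nonneg_left (hd k) (by norm_num)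
  have hsd : Summable (fun k => dTerm z ξ q k) :=
    Summable.of_norm_bounded hgeom hd
  have hqc : ‖(q : ℂ)‖ < 1 := by
    rw [Complex.norm_real, Real.norm_eq_abs, abs_of_nonneg hq0.le]; exact hq1
  have hq2c : ‖(q : ℂ) ^ 2‖ < 1 := by
    rw [norm_pow]
    exact pow_lt_one₀ (norm_nonneg _) hqc (by norm_num)
  have hone_sub : (1 : ℂ) - (q : ℂ) ≠ 0 := by
    intro h
    have : ((1 - q : ℝ) : ℂ) = 0 := by push_cast; linear_combination h
    exact h1q.ne' (by exact_mod_cast this)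
  have hone_add : (1 : ℂ) + (q : ℂ) ≠ 0 := by
    intro h
    have : ((1 + q : ℝ) : ℂ) = 0 := by push_cast; linear_combination h
    have : (1 + q : ℝ) = 0 := by exact_mod_cast this
    linarith
  have htd : ∑' k, dTerm z ξ q k
      = -(((Real.sqrt 2 : ℝ) : ℂ) * (ξ : ℂ) * z) + z ^ 2 / (1 + (q : ℂ)) := by
    have e1 : ∀ k : ℕ, dTerm z ξ q k
        = (-(((Real.sqrt 2 : ℝ) : ℂ) * z * (ξ : ℂ) * ((1 - q : ℝ) : ℂ))) * (q : ℂ) ^ k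
          + (z ^ 2 * ((1 - q : ℝ) : ℂ)) * ((q : ℂ) ^ 2) ^ k := by
      intro k
      rw [dTerm, ← pow_mul]
      ring
    have s1 : Summable (fun k : ℕ => (-(((Real.sqrt 2 : ℝ) : ℂ) * z * (ξ : ℂ)
        * ((1 - q : ℝ) : ℂ))) * (q : ℂ) ^ k) :=
      (summable_geometric_of_norm_lt_one hqc).mul_left _
    have s2 : Summable (fun k : ℕ => (z ^ 2 * ((1 - q : ℝ) : ℂ)) * ((q : ℂ) ^ 2) ^ k) :=
      (summable_geometric_of_norm_lt_one hq2c).mul_left _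
    rw [tsum_congr e1, Summable.tsum_add s1 s2, tsum_mul_left, tsum_mul_left,
      tsum_geometric_of_norm_lt_one hqc, tsum_geometric_of_norm_lt_one hq2c]
    have hq2 : (1 : ℂ) - (q : ℂ) ^ 2 ≠ 0 := by
      rw [show (1 : ℂ) - (q : ℂ) ^ 2 = (1 - (q : ℂ)) * (1 + (q : ℂ)) by ring]
      exact mul_ne_zero hone_sub hone_add
    push_cast
    field_simp
    ring
  have hEeq : Eterm z ξ q
      = (∑' k, Complex.log (1 + dTerm z ξ q k)) - ∑' k, dTerm z ξ q k := by
    rw [Eterm, Summable.tsum_sub hslog hsd]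
  have hP : HasProd (fun k : ℕ => (1 + dTerm z ξ q k)⁻¹)
      (Complex.exp (-(∑' k, Complex.log (1 + dTerm z ξ q k)))) := by
    have h1 := (hslog.hasSum.neg).cexp
    refine h1.congr_fun fun k => ?_
    simp only [Function.comp]
    rw [Complex.exp_neg, Complex.exp_log (hne k)]
  refine ⟨hP.multipliable, ?_, ?_⟩
  · rw [hP.tprod_eq]
    congr 1
    have : (∑' k, Complex.log (1 + dTerm z ξ q k)) = (∑' k, dTerm z ξ q k) + Eterm z ξ q := by
      rw [hEeq]; ring
    rw [this, htd]
    ring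
  · have hterm : ∀ k, ‖Complex.log (1 + dTerm z ξ q k) - dTerm z ξ q k‖
        ≤ C ^ 2 * (1 - q) ^ 2 * q ^ k := by
      intro k
      have hlt : ‖dTerm z ξ q k‖ < 1 := lt_of_le_of_lt (hdhalf k) (by norm_num)
      have h1 := Complex.norm_log_one_add_sub_self_le hlt
      have hinv : (1 - ‖dTerm z ξ q k‖)⁻¹ ≤ 2 := by
        rw [inv_le_comm₀ (by linarith [hdhalf k]) (by norm_num)]
        linarith [hdhalf k]
      have hsq : ‖dTerm z ξ q k‖ ^ 2 ≤ (C * (1 - q) * q ^ k) ^ 2 :=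
        pow_le_pow_left₀ (norm_nonneg _) (hd k) 2
      calc ‖Complex.log (1 + dTerm z ξ q k) - dTerm z ξ q k‖
          ≤ ‖dTerm z ξ q k‖ ^ 2 * (1 - ‖dTerm z ξ q k‖)⁻¹ / 2 := h1
        _ ≤ ‖dTerm z ξ q k‖ ^ 2 := by
            linarith [mul_le_mul_of_nonneg_left hinv (sq_nonneg (‖dTerm z ξ q k‖))]
        _ ≤ (C * (1 - q) * q ^ k) ^ 2 := hsq
        _ ≤ C ^ 2 * (1 - q) ^ 2 * q ^ k := by
            have h2 : ((q:ℝ) ^ k) ^ 2 ≤ q ^ k := by nlinarith [hqk0 k, hqk1 k]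
            nlinarith [mul_le_mul_of_nonneg_left h2 (sq_nonneg (C * (1 - q)))]
    have hgeom2 : Summable (fun k : ℕ => C ^ 2 * (1 - q) ^ 2 * q ^ k) :=
      (summable_geometric_of_lt_one hq0.le hq1).mul_left _
    have hsn : Summable (fun k => ‖Complex.log (1 + dTerm z ξ q k) - dTerm z ξ q k‖) :=
      Summable.of_nonneg_of_le (fun k => norm_nonneg _) hterm hgeom2
    calc ‖Eterm z ξ q‖ ≤ ∑' k, ‖Complex.log (1 + dTerm z ξ q k) - dTerm z ξ q k‖ :=
          norm_tsum_le_tsum_norm hsn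
      _ ≤ ∑' k : ℕ, C ^ 2 * (1 - q) ^ 2 * q ^ k := Summable.tsum_le_tsum hterm hsn hgeom2
      _ = C ^ 2 * (1 - q) ^ 2 * (1 - q)⁻¹ := by
          rw [tsum_mul_left, tsum_geometric_of_lt_one hq0.le hq1]
      _ = C ^ 2 * (1 - q) := by field_simp

/-- The infinite product converges near `q = 1⁻`, is nonzero there, and tends to
`exp(√2 ξ z - z²/2)` as `q → 1⁻`. -/
theorem infinite_product_tendsto_exp (z : ℂ) (ξ : ℝ) :
    (∀ᶠ q : ℝ in 𝓝[<] (1 : ℝ),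
        Multipliable (fun k : ℕ =>
          (1 - ((Real.sqrt 2 : ℝ) : ℂ) * z * (ξ : ℂ) * (q : ℂ) ^ k * ((1 - q : ℝ) : ℂ)
            + z ^ 2 * (q : ℂ) ^ (2 * k) * ((1 - q : ℝ) : ℂ))⁻¹)
        ∧ (∏' k : ℕ,
            (1 - ((Real.sqrt 2 : ℝ) : ℂ) * z * (ξ : ℂ) * (q : ℂ) ^ k * ((1 - q : ℝ) : ℂ)
              + z ^ 2 * (q : ℂ) ^ (2 * k) * ((1 - q : ℝ) : ℂ))⁻¹) ≠ 0)
    ∧ Tendsto (fun q : ℝ =>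
        ∏' k : ℕ,
          (1 - ((Real.sqrt 2 : ℝ) : ℂ) * z * (ξ : ℂ) * (q : ℂ) ^ k * ((1 - q : ℝ) : ℂ)
            + z ^ 2 * (q : ℂ) ^ (2 * k) * ((1 - q : ℝ) : ℂ))⁻¹)
        (𝓝[<] (1 : ℝ))
        (𝓝 (Complex.exp (((Real.sqrt 2 : ℝ) : ℂ) * (ξ : ℂ) * z - z ^ 2 / 2))) := by
  have hfun : ∀ q : ℝ, (fun k : ℕ =>
      (1 - ((Real.sqrt 2 : ℝ) : ℂ) * z * (ξ : ℂ) * (q : ℂ) ^ k * ((1 - q : ℝ) : ℂ)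
        + z ^ 2 * (q : ℂ) ^ (2 * k) * ((1 - q : ℝ) : ℂ))⁻¹)
      = fun k : ℕ => (1 + dTerm z ξ q k)⁻¹ := by
    intro q
    funext k
    rw [dTerm]
    congr 1
    ring
  set C : ℝ := Real.sqrt 2 * ‖z‖ * |ξ| + ‖z‖ ^ 2 with hCdef
  have hC0 : 0 ≤ C := by positivity
  set δ : ℝ := min (1 / 2) (1 / (2 * (C + 1))) with hδdef
  have hδ0 : 0 < δ := lt_min (by norm_num) (by positivity)
  have hδhalf : δ ≤ 1 / 2 := min_le_left _ _
  have hmem : Set.Ioo (1 - δ) 1 ∈ 𝓝[<] (1 : ℝ) :=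
    Ioo_mem_nhdsLT_of_mem ⟨by linarith, le_refl _⟩
  have hgood : ∀ q ∈ Set.Ioo (1 - δ) 1, 0 < q ∧ q < 1 ∧ C * (1 - q) ≤ 1 / 2 := by
    intro q hq
    obtain ⟨h1, h2⟩ := hq
    refine ⟨by linarith, h2, ?_⟩
    have h1q : 1 - q < δ := by linarith
    have hpos : 0 < C + 1 := by linarith
    have hδle : δ ≤ 1 / (2 * (C + 1)) := min_le_right _ _
    have h3 : (C + 1) * (1 - q) ≤ (C + 1) * δ := by nlinarith
    have h4 : (C + 1) * δ ≤ (C + 1) * (1 / (2 * (C + 1))) := by nlinarith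
    have h5 : (C + 1) * (1 / (2 * (C + 1))) = 1 / 2 := by field_simp
    nlinarith
  constructor
  · filter_upwards [hmem] with q hq
    obtain ⟨hq0, hq1, hsm⟩ := hgood q hq
    obtain ⟨hm, he, _⟩ := key z ξ q hq0 hq1 hsm
    rw [hfun q]
    exact ⟨hm, by rw [he]; exact Complex.exp_ne_zero _⟩
  · have hEV : ∀ᶠ q : ℝ in 𝓝[<] (1 : ℝ),
        Complex.exp (((Real.sqrt 2 : ℝ) : ℂ) * (ξ : ℂ) * z - z ^ 2 / (1 + (q : ℂ))
            - Eterm z ξ q)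
          = ∏' k : ℕ,
            (1 - ((Real.sqrt 2 : ℝ) : ℂ) * z * (ξ : ℂ) * (q : ℂ) ^ k * ((1 - q : ℝ) : ℂ)
              + z ^ 2 * (q : ℂ) ^ (2 * k) * ((1 - q : ℝ) : ℂ))⁻¹ := by
      filter_upwards [hmem] with q hq
      obtain ⟨hq0, hq1, hsm⟩ := hgood q hq
      obtain ⟨_, he, _⟩ := key z ξ q hq0 hq1 hsm
      rw [hfun q, he]
    have hEbd : ∀ᶠ q : ℝ in 𝓝[<] (1 : ℝ), ‖Eterm z ξ q‖ ≤ C ^ 2 * (1 - q) := by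
      filter_upwards [hmem] with q hq
      obtain ⟨hq0, hq1, hsm⟩ := hgood q hq
      exact (key z ξ q hq0 hq1 hsm).2.2
    have hE0 : Tendsto (fun q : ℝ => Eterm z ξ q) (𝓝[<] (1 : ℝ)) (𝓝 0) := by
      apply squeeze_zero_norm' hEbd
      have : Tendsto (fun q : ℝ => C ^ 2 * (1 - q)) (𝓝 (1 : ℝ)) (𝓝 (C ^ 2 * (1 - 1))) :=
        (continuous_const.mul (continuous_const.sub continuous_id)).tendsto 1
      simpa using this.mono_left nhdsWithin_le_nhds
    have hcoe : Tendsto (fun q : ℝ => ((q : ℂ))) (𝓝[<] (1 : ℝ)) (𝓝 1) := by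
      have : Tendsto (fun q : ℝ => ((q : ℂ))) (𝓝 (1 : ℝ)) (𝓝 ((1 : ℝ) : ℂ)) :=
        Complex.continuous_ofReal.tendsto 1
      simpa using this.mono_left nhdsWithin_le_nhds
    have hdiv : Tendsto (fun q : ℝ => z ^ 2 / (1 + (q : ℂ))) (𝓝[<] (1 : ℝ))
        (𝓝 (z ^ 2 / 2)) := by
      have h2 : Tendsto (fun q : ℝ => (1 : ℂ) + (q : ℂ)) (𝓝[<] (1 : ℝ)) (𝓝 2) := by
        have := tendsto_const_nhds (x := (1 : ℂ)) (f := 𝓝[<] (1 : ℝ)) |>.add hcoe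
        norm_num at this
        exact this
      exact tendsto_const_nhds.div h2 two_ne_zero
    have harg : Tendsto (fun q : ℝ =>
        ((Real.sqrt 2 : ℝ) : ℂ) * (ξ : ℂ) * z - z ^ 2 / (1 + (q : ℂ)) - Eterm z ξ q)
        (𝓝[<] (1 : ℝ))
        (𝓝 (((Real.sqrt 2 : ℝ) : ℂ) * (ξ : ℂ) * z - z ^ 2 / 2)) := by
      have := (tendsto_const_nhds (x := ((Real.sqrt 2 : ℝ) : ℂ) * (ξ : ℂ) * z)
        (f := 𝓝[<] (1 : ℝ))).sub hdiv |>.sub hE0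
      simpa using this
    exact (harg.cexp).congr' hEV
end
end

section
/- Let n∈ℕ, α>-1 a real number, and x∈ℝ. Then lim_{q→1⁻} ∑_{k=0}^n (q^{-n};q)_k / ( (q^{α+1};q)_k (q;q)_k ) · ( q(1-q)x )^k = ∑_{k=0}^n (-n)_k/(α+1)_k · x^k/k! = n!/(α+1)_n · L_n^{(α)}(x), where (a)_k = a(a+1)···(a+k-1) is the Pochhammer symbol and L_n^{(α)}(x) = ∑_{k=0}^n (-1)^k/k! · (α+k+1)_{n-k}/(n-k)! · x^k is the Laguerre polynomial. (The q-hypergeometric sum defining the Wall polynomial converges, as q→1, to the ₁F₁ form of the Laguerre polynomial.) -/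
open Filter Finset MeasureTheory Topology

noncomputable section

/-- The Pochhammer symbol `(a)_k = a(a+1)⋯(a+k-1)` for real `a`. -/
def pochR (a : ℝ) (k : ℕ) : ℝ := ∏ i ∈ Finset.range k, (a + i)

lemma pochR_ne_zero {a : ℝ} (ha : 0 < a) (k : ℕ) : pochR a k ≠ 0 :=
  Finset.prod_ne_zero_iff.2 fun i _ => by positivity

lemma pochR_add (a : ℝ) (m l : ℕ) : pochR a (m + l) = pochR a m * pochR (a + m) l := by
  unfold pochR
  rw [Finset.prod_range_add]
  congr 1
  exact Finset.prod_congr rfl fun i _ => by push_cast; ring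

lemma pochR_neg_nat (n : ℕ) : ∀ k : ℕ, pochR (-(n : ℝ)) k = (-1) ^ k * (n.descFactorial k : ℝ)
  | 0 => by simp [pochR]
  | (k+1) => by
    rw [pochR, Finset.prod_range_succ, ← pochR, pochR_neg_nat n k, Nat.descFactorial_succ]
    rcases le_or_gt k n with h | h
    · push_cast [h]
      ring
    · rw [Nat.descFactorial_eq_zero_iff_lt.2 h]
      simp

lemma tendsto_one_sub_rpow_div (a : ℝ) :
    Tendsto (fun q : ℝ => (1 - q ^ a) / (1 - q)) (𝓝[<] (1:ℝ)) (𝓝 a) := by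
  have hd : HasDerivAt (fun q : ℝ => q ^ a) a 1 := by
    simpa using Real.hasDerivAt_rpow_const (x := 1) (p := a) (Or.inl one_ne_zero)
  have h := hasDerivAt_iff_tendsto_slope.mp hd
  have h2 : Tendsto (slope (fun q : ℝ => q ^ a) 1) (𝓝[<] 1) (𝓝 a) :=
    h.mono_left (nhdsWithin_mono _ fun y hy => ne_of_lt hy)
  refine h2.congr fun q => ?_
  rw [slope_def_field, Real.one_rpow]
  rw [← neg_div_neg_eq]
  ring_nf

lemma tendsto_one_sub_div_rpow {a : ℝ} (ha : a ≠ 0) :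
    Tendsto (fun q : ℝ => (1 - q) / (1 - q ^ a)) (𝓝[<] (1:ℝ)) (𝓝 a⁻¹) := by
  have := (tendsto_one_sub_rpow_div a).inv₀ ha
  refine this.congr fun q => ?_
  rw [inv_div]


/-- The q-hypergeometric sum defining the Wall polynomial converges, as `q → 1⁻`,
to the ₁F₁ form of the Laguerre polynomial. -/
theorem wall_sum_tendsto_laguerre (n : ℕ) (α : ℝ) (hα : -1 < α) (x : ℝ) :
    Tendsto (fun q : ℝ =>
        ∑ k ∈ Finset.range (n + 1),
          qPochR (q ^ (-(n : ℤ))) q k / (qPochR (q ^ (α + 1)) q k * qPochR q q k)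
            * (q * (1 - q) * x) ^ k)
      (𝓝[<] (1 : ℝ))
      (𝓝 (∑ k ∈ Finset.range (n + 1), pochR (-(n : ℝ)) k / pochR (α + 1) k * x ^ k / (k.factorial : ℝ)))
    ∧ (∑ k ∈ Finset.range (n + 1), pochR (-(n : ℝ)) k / pochR (α + 1) k * x ^ k / (k.factorial : ℝ))
        = (n.factorial : ℝ) / pochR (α + 1) n
            * ∑ k ∈ Finset.range (n + 1),
                (-1 : ℝ) ^ k / (k.factorial : ℝ)
                  * (pochR (α + k + 1) (n - k) / ((n - k).factorial : ℝ)) * x ^ k := by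
  have hα1 : (0:ℝ) < α + 1 := by linarith
  constructor
  · -- the limit
    have key : Tendsto (fun q : ℝ =>
        ∑ k ∈ Finset.range (n+1), ∏ i ∈ Finset.range k,
          ((1 - q ^ ((i:ℝ) - n)) / (1 - q) * ((1 - q) / (1 - q ^ (α + 1 + i))) *
            ((1 - q) / (1 - q ^ ((i:ℝ) + 1))) * (q * x)))
        (𝓝[<] (1:ℝ))
        (𝓝 (∑ k ∈ Finset.range (n+1), ∏ i ∈ Finset.range k,
          (((i:ℝ) - n) * (α + 1 + i)⁻¹ * ((i:ℝ) + 1)⁻¹ * (1 * x)))) := by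
      apply tendsto_finset_sum
      intro k _
      apply tendsto_finset_prod
      intro i _
      have h1 : (α + 1 + (i:ℝ)) ≠ 0 := by positivity
      have h2 : ((i:ℝ) + 1) ≠ 0 := by positivity
      have hx : Tendsto (fun q : ℝ => q * x) (𝓝[<] (1:ℝ)) (𝓝 (1 * x)) :=
        ((continuous_id.mul continuous_const).tendsto 1).mono_left nhdsWithin_le_nhds
      exact (((tendsto_one_sub_rpow_div _).mul (tendsto_one_sub_div_rpow h1)).mul
        (tendsto_one_sub_div_rpow h2)).mul hx
    -- identify the limit value
    have hval : (∑ k ∈ Finset.range (n+1), ∏ i ∈ Finset.range k,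
          (((i:ℝ) - n) * (α + 1 + i)⁻¹ * ((i:ℝ) + 1)⁻¹ * (1 * x)))
        = ∑ k ∈ Finset.range (n + 1), pochR (-(n : ℝ)) k / pochR (α + 1) k * x ^ k / (k.factorial : ℝ) := by
      refine Finset.sum_congr rfl fun k _ => ?_
      have hA : ∏ i ∈ Finset.range k, ((i:ℝ) - n) = pochR (-(n:ℝ)) k :=
        Finset.prod_congr rfl fun i _ => by ring
      have hC : ∏ i ∈ Finset.range k, ((i:ℝ) + 1) = (k.factorial : ℝ) := by
        rw [← Finset.prod_range_add_one_eq_factorial]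
        push_cast
        rfl
      simp only [Finset.prod_mul_distrib, Finset.prod_inv_distrib, Finset.prod_const,
        Finset.card_range, one_mul, hA, hC]
      rw [show (∏ i ∈ Finset.range k, (α + 1 + (i:ℝ))) = pochR (α + 1) k from rfl]
      field_simp
    rw [← hval]
    -- eventual equality of the functions
    refine key.congr' ?_
    have hev : ∀ᶠ q in 𝓝[<] (1:ℝ), 0 < q ∧ q < 1 := by
      filter_upwards [Ioo_mem_nhdsLT_of_mem (by norm_num : (1:ℝ) ∈ Set.Ioc (0:ℝ) 1)] with q hq
      exact ⟨hq.1, hq.2⟩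
    filter_upwards [hev] with q hq
    obtain ⟨hq0, hq1⟩ := hq
    have hq0' : (0:ℝ) ≤ q := hq0.le
    have hqq : (1:ℝ) - q ≠ 0 := by linarith
    refine Finset.sum_congr rfl fun k _ => ?_
    have hconvA : ∀ i : ℕ, 1 - q ^ (-(n:ℤ)) * q ^ i = 1 - q ^ ((i:ℝ) - n) := fun i => by
      rw [← Real.rpow_intCast q (-(n:ℤ)), ← Real.rpow_natCast q i, ← Real.rpow_add hq0]
      congr 2
      push_cast
      ring
    have hconvB : ∀ i : ℕ, 1 - q ^ (α + 1) * q ^ i = 1 - q ^ (α + 1 + i) := fun i => by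
      rw [← Real.rpow_natCast q i, ← Real.rpow_add hq0]
    have hconvC : ∀ i : ℕ, 1 - q * q ^ i = 1 - q ^ ((i:ℝ) + 1) := fun i => by
      rw [show q * q ^ i = q ^ (i + 1) from by ring, ← Real.rpow_natCast q (i + 1)]
      push_cast
      ring_nf
    have hBne : ∀ i : ℕ, (1:ℝ) - q ^ (α + 1 + i) ≠ 0 := fun i => by
      have : q ^ (α + 1 + (i:ℝ)) < 1 := Real.rpow_lt_one hq0' hq1 (by positivity)
      linarith
    have hCne : ∀ i : ℕ, (1:ℝ) - q ^ ((i:ℝ) + 1) ≠ 0 := fun i => by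
      have : q ^ ((i:ℝ) + 1) < 1 := Real.rpow_lt_one hq0' hq1 (by positivity)
      linarith
    have eB : qPochR (q ^ (α + 1)) q k = ∏ i ∈ Finset.range k, (1 - q ^ (α + 1 + i)) :=
      Finset.prod_congr rfl fun i _ => hconvB i
    have eA : qPochR (q ^ (-(n:ℤ))) q k = ∏ i ∈ Finset.range k, (1 - q ^ ((i:ℝ) - n)) :=
      Finset.prod_congr rfl fun i _ => hconvA i
    have eC : qPochR q q k = ∏ i ∈ Finset.range k, (1 - q ^ ((i:ℝ) + 1)) :=
      Finset.prod_congr rfl fun i _ => hconvC i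
    rw [eA, eB, eC]
    simp only [Finset.prod_mul_distrib, Finset.prod_div_distrib, Finset.prod_const,
      Finset.card_range]
    have hBprod : (∏ i ∈ Finset.range k, (1 - q ^ (α + 1 + (i:ℝ)))) ≠ 0 :=
      Finset.prod_ne_zero_iff.2 fun i _ => hBne i
    have hCprod : (∏ i ∈ Finset.range k, (1 - q ^ ((i:ℝ) + 1))) ≠ 0 :=
      Finset.prod_ne_zero_iff.2 fun i _ => hCne i
    field_simp
    rw [mul_pow, mul_pow]
    ring
  · -- the identity
    rw [Finset.mul_sum]
    refine Finset.sum_congr rfl fun k hk => ?_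
    have hk' : k ≤ n := Nat.lt_succ_iff.mp (Finset.mem_range.mp hk)
    have hsplit : pochR (α + 1) n = pochR (α + 1) k * pochR (α + 1 + k) (n - k) := by
      rw [← pochR_add, Nat.add_sub_cancel' hk']
    have hneg : pochR (-(n : ℝ)) k = (-1) ^ k * (n.descFactorial k : ℝ) := pochR_neg_nat n k
    have hdesc : ((n - k).factorial : ℝ) * (n.descFactorial k : ℝ) = (n.factorial : ℝ) := by
      rw [← Nat.cast_mul, Nat.factorial_mul_descFactorial hk']
    have hPk : pochR (α + 1) k ≠ 0 := pochR_ne_zero hα1 k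
    have hPr : pochR (α + 1 + k) (n - k) ≠ 0 := pochR_ne_zero (by positivity) _
    have hkf : (k.factorial : ℝ) ≠ 0 := Nat.cast_ne_zero.2 k.factorial_ne_zero
    have hnkf : ((n - k).factorial : ℝ) ≠ 0 := Nat.cast_ne_zero.2 (n - k).factorial_ne_zero
    rw [hsplit, hneg, show α + (k:ℝ) + 1 = α + 1 + k from by ring]
    field_simp
    rw [← hdesc]
    ring
end
end

section
/- Let 0<q<1, m∈ℕ, x∈ℂ, and a∈ℂ with (aq;q)_k ≠ 0 for all 1≤k≤m. Then P_m(x;a|q) = (aq;q)_m^{-1} · ∑_{r≥0, k≥0, r+k≤m} (q^{-m};q)_{r+k} · (qx)^r/(q;q)_r · (a q^{m+1})^k/(q;q)_k, where P_m is the Wall polynomial. (The double-sum representation of the Wall polynomial used in the proof of Proposition 1.1; the paper applies it with a = q^{j-m} for j ≥ m. Note the double sum is finite since (q^{-m};q)_{r+k} = 0 whenever r+k > m.) -/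
open Filter Finset MeasureTheory Topology

noncomputable section

lemma poch_succ (a q : ℂ) (n : ℕ) :
    qPochC a q (n+1) = qPochC a q n * (1 - a * q ^ n) :=
  Finset.prod_range_succ _ n

lemma poch_succ' (a q : ℂ) (n : ℕ) :
    qPochC a q (n+1) = (1 - a) * qPochC (a*q) q n := by
  simp only [qPochC]
  rw [Finset.prod_range_succ', pow_zero, mul_one, mul_comm]
  exact congrArg _ (Finset.prod_congr rfl fun i _ => by ring)

lemma poch_add (a q : ℂ) (n m : ℕ) :
    qPochC a q (n+m) = qPochC a q n * qPochC (a * q ^ n) q m := by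
  rw [qPochC, Finset.prod_range_add]
  congr 1
  exact Finset.prod_congr rfl fun i _ => by rw [pow_add]; ring

lemma keyN (q : ℂ) (hpoch : ∀ k, qPochC q q k ≠ 0) :
    ∀ (n : ℕ) (w : ℂ),
      ∑ k ∈ Finset.range (n+1),
        (∏ i ∈ Finset.range k, (q^n - q^i)) / qPochC q q k * w ^ k = qPochC w q n := by
  intro n
  induction n with
  | zero => intro w; simp [qPochC]
  | succ n ih =>
    intro w
    have hfac : ∀ k : ℕ, (1 - q * q ^ k) ≠ 0 := by
      intro k
      have := hpoch (k+1)
      rw [poch_succ] at this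
      exact fun h => this (by rw [h, mul_zero])
    rw [poch_succ', ← ih (w*q)]
    have hzero : (∏ i ∈ Finset.range (n+1), (q^n - q^i)) = 0 :=
      Finset.prod_eq_zero (Finset.mem_range.mpr (Nat.lt_succ_self n)) (by ring)
    have expand : (1 - w) * ∑ k ∈ Finset.range (n+1),
        (∏ i ∈ Finset.range k, (q^n - q^i)) / qPochC q q k * (w*q) ^ k
      = (∑ k ∈ Finset.range (n+2),
          (∏ i ∈ Finset.range k, (q^n - q^i)) / qPochC q q k * q^k * w ^ k)
        - ∑ k ∈ Finset.range (n+1),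
          (∏ i ∈ Finset.range k, (q^n - q^i)) / qPochC q q k * q^k * w ^ (k+1) := by
      rw [Finset.sum_range_succ (n := n+1), hzero]
      simp only [zero_div, zero_mul, add_zero]
      rw [Finset.mul_sum, ← Finset.sum_sub_distrib]
      exact Finset.sum_congr rfl fun k _ => by ring
    rw [expand]
    -- now peel off the k=0 terms on both sides
    rw [Finset.sum_range_succ' (fun k => (∏ i ∈ Finset.range k, (q^(n+1) - q^i)) / qPochC q q k * w ^ k) (n+1),
        Finset.sum_range_succ' (fun k => (∏ i ∈ Finset.range k, (q^n - q^i)) / qPochC q q k * q^k * w ^ k) (n+1)]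
    simp only [pow_zero, mul_one, Finset.range_zero, Finset.prod_empty]
    rw [add_sub_right_comm]
    congr 1
    rw [← Finset.sum_sub_distrib]
    refine Finset.sum_congr rfl fun k _ => ?_
    have h1 : (∏ i ∈ Finset.range (k+1), (q^(n+1) - q^i))
        = q^k * (∏ i ∈ Finset.range k, (q^n - q^i)) * (q^(n+1) - 1) := by
      rw [Finset.prod_range_succ', pow_zero]
      congr 1
      rw [show (∏ i ∈ Finset.range k, (q^(n+1) - q^(i+1)))
          = ∏ i ∈ Finset.range k, (q * (q^n - q^i)) from
        Finset.prod_congr rfl fun i _ => by rw [pow_succ', pow_succ']; ring]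
      rw [Finset.prod_mul_distrib, Finset.prod_const, Finset.card_range]
    have h2 : (∏ i ∈ Finset.range (k+1), (q^n - q^i))
        = (∏ i ∈ Finset.range k, (q^n - q^i)) * (q^n - q^k) :=
      Finset.prod_range_succ _ _
    rw [h1, h2, poch_succ]
    simp only [div_eq_mul_inv, mul_inv]
    linear_combination (-(∏ i ∈ Finset.range k, (q^n - q^i)) * (qPochC q q k)⁻¹ * w^(k+1) * q^k)
      * (mul_inv_cancel₀ (hfac k))

/-- The double-sum representation of the Wall polynomial. -/
theorem wall_double_sum (q : ℝ) (hq0 : 0 < q) (hq1 : q < 1) (m : ℕ) (x a : ℂ)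
    (ha : ∀ k : ℕ, 1 ≤ k → k ≤ m → qPochC (a * (q : ℂ)) (q : ℂ) k ≠ 0) :
    wallP m x a (q : ℂ)
      = (qPochC (a * (q : ℂ)) (q : ℂ) m)⁻¹
          * ∑ r ∈ Finset.range (m + 1), ∑ k ∈ Finset.range (m + 1 - r),
              qPochC ((q : ℂ) ^ (-(m : ℤ))) (q : ℂ) (r + k)
                * ((q : ℂ) * x) ^ r / qPochC (q : ℂ) (q : ℂ) r
                * (a * (q : ℂ) ^ (m + 1)) ^ k / qPochC (q : ℂ) (q : ℂ) k := by
  rw [wallP]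
  have hQ0 : (q:ℂ) ≠ 0 := by exact_mod_cast hq0.ne'
  have hqq : ∀ k, qPochC (q:ℂ) (q:ℂ) k ≠ 0 := by
    intro k
    rw [qPochC]
    refine Finset.prod_ne_zero_iff.mpr fun i _ => ?_
    have hlt : q * q ^ i < 1 := by
      have := pow_lt_one₀ hq0.le hq1 (Nat.succ_ne_zero i)
      rwa [pow_succ'] at this
    have hr : (1:ℝ) - q * q ^ i ≠ 0 := sub_ne_zero.mpr hlt.ne'
    exact_mod_cast hr
  have hPr : ∀ r, r ≤ m → qPochC (a*(q:ℂ)) (q:ℂ) r ≠ 0 := by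
    intro r hrm
    rcases Nat.eq_zero_or_pos r with h | h
    · subst h; simp [qPochC]
    · exact ha r h hrm
  have hPm : qPochC (a*(q:ℂ)) (q:ℂ) m ≠ 0 := hPr m le_rfl
  rw [Finset.mul_sum]
  refine Finset.sum_congr rfl fun r hr => ?_
  have hrm : r ≤ m := Nat.lt_succ_iff.mp (Finset.mem_range.mp hr)
  -- key per-k identity
  have key_k : ∀ k : ℕ, qPochC ((q:ℂ)^(-(m:ℤ)) * (q:ℂ)^r) (q:ℂ) k * (a*(q:ℂ)^(m+1))^k
      = (∏ i ∈ Finset.range k, ((q:ℂ)^(m-r) - (q:ℂ)^i)) * (a*(q:ℂ)^(r+1))^k := by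
    intro k
    have hh : (q:ℂ)^(-(m:ℤ)) * (q:ℂ)^r * (q:ℂ)^(m-r) = 1 := by
      rw [mul_assoc, ← pow_add, Nat.add_sub_cancel' hrm, zpow_neg, zpow_natCast,
        inv_mul_cancel₀ (pow_ne_zero _ hQ0)]
    have hprod : (∏ i ∈ Finset.range k, ((q:ℂ)^(m-r) - (q:ℂ)^i))
        = qPochC ((q:ℂ)^(-(m:ℤ)) * (q:ℂ)^r) (q:ℂ) k * ((q:ℂ)^(m-r))^k := by
      have hc : ∀ i ∈ Finset.range k, ((q:ℂ)^(m-r) - (q:ℂ)^i)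
          = (1 - ((q:ℂ)^(-(m:ℤ)) * (q:ℂ)^r) * (q:ℂ)^i) * (q:ℂ)^(m-r) := fun i _ => by
        linear_combination ((q:ℂ)^i) * hh
      rw [Finset.prod_congr rfl hc, Finset.prod_mul_distrib, Finset.prod_const,
        Finset.card_range, qPochC]
    rw [hprod, mul_assoc]
    congr 1
    rw [← mul_pow]
    congr 1
    rw [show (q:ℂ)^(m-r) * (a*(q:ℂ)^(r+1)) = a * ((q:ℂ)^(r+1) * (q:ℂ)^(m-r)) by ring,
      ← pow_add, show (r+1) + (m-r) = m+1 by omega]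
  have step : ∀ k : ℕ, qPochC ((q:ℂ)^(-(m:ℤ))) (q:ℂ) (r+k) * ((q:ℂ)*x)^r / qPochC (q:ℂ) (q:ℂ) r
        * (a*(q:ℂ)^(m+1))^k / qPochC (q:ℂ) (q:ℂ) k
      = (qPochC ((q:ℂ)^(-(m:ℤ))) (q:ℂ) r * ((q:ℂ)*x)^r / qPochC (q:ℂ) (q:ℂ) r)
        * ((∏ i ∈ Finset.range k, ((q:ℂ)^(m-r) - (q:ℂ)^i)) / qPochC (q:ℂ) (q:ℂ) k
            * (a*(q:ℂ)^(r+1))^k) := by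
    intro k
    rw [poch_add]
    have h := key_k k
    simp only [div_eq_mul_inv]
    linear_combination ((q:ℂ)*x)^r * (qPochC (q:ℂ) (q:ℂ) r)⁻¹ * (qPochC (q:ℂ) (q:ℂ) k)⁻¹
      * qPochC ((q:ℂ)^(-(m:ℤ))) (q:ℂ) r * h
  have hsum : (∑ k ∈ Finset.range (m+1-r),
        qPochC ((q:ℂ)^(-(m:ℤ))) (q:ℂ) (r+k) * ((q:ℂ)*x)^r / qPochC (q:ℂ) (q:ℂ) r
          * (a*(q:ℂ)^(m+1))^k / qPochC (q:ℂ) (q:ℂ) k)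
      = (qPochC ((q:ℂ)^(-(m:ℤ))) (q:ℂ) r * ((q:ℂ)*x)^r / qPochC (q:ℂ) (q:ℂ) r)
        * (qPochC (a*(q:ℂ)) (q:ℂ) m / qPochC (a*(q:ℂ)) (q:ℂ) r) := by
    rw [show m+1-r = (m-r)+1 by omega]
    rw [Finset.sum_congr rfl (fun k _ => step k), ← Finset.mul_sum]
    congr 1
    rw [keyN (q:ℂ) hqq (m-r) (a*(q:ℂ)^(r+1))]
    have h2 := poch_add (a*(q:ℂ)) (q:ℂ) r (m-r)
    rw [Nat.add_sub_cancel' hrm] at h2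
    rw [h2, show a*(q:ℂ)*(q:ℂ)^r = a*(q:ℂ)^(r+1) from by rw [pow_succ']; ring]
    field_simp [hPr r hrm]
  rw [hsum]
  have e1 : qPochC (a*(q:ℂ)) (q:ℂ) m * (qPochC (a*(q:ℂ)) (q:ℂ) m)⁻¹ = 1 := mul_inv_cancel₀ hPm
  simp only [div_eq_mul_inv, mul_inv]
  linear_combination (-(qPochC ((q:ℂ)^(-(m:ℤ))) (q:ℂ) r * ((q:ℂ)*x)^r
    * (qPochC (a*(q:ℂ)) (q:ℂ) r)⁻¹ * (qPochC (q:ℂ) (q:ℂ) r)⁻¹)) * e1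
end
end
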